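/- arXiv:1009.0236 — 7 statements merged into one kernel-verified Lean document; each statement's English description precedes it below -/
import Mathlib

section
/- Let Si denote the sine integral, Si(z) = ∫₀^z (sin t)/t dt, and let arcsin denote the real inverse sine function. For every natural number n, ∫₀¹ x^{2n+1} / arcsin(x) dx = (1/2^{2n+1}) · Σ_{k=0}^n C(2n+1, k) · ((2n-2k+2)/(2n-k+2)) · Si(π(n+1-k)) · (-1)^{k+n}, where C(n,k) denotes the binomial coefficient. -/
open Real

/-- The sine integral `Si(z) = ∫₀^z (sin t)/t dt`. -/
noncomputable def Si (z : ℝ) : ℝ := ∫ t in (0:ℝ)..z, Real.sin t / t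

section Aux
open Finset MeasureTheory Set Filter Complex

lemma poly_id (n : ℕ) (t : ℂ) :
    (t - 1) ^ (2 * n + 1) * (t + 1) =
      ∑ k ∈ range (n + 1), (-1 : ℂ) ^ k * ((2 * n + 1).choose k : ℂ) *
        (t ^ (2 * n + 2 - k) + t ^ (2 * n + 1 - k) - t ^ k - t ^ (k + 1)) := by
  set G : ℕ → ℂ := fun j => (-1 : ℂ) ^ (2 * n + 1 - j) * ((2 * n + 1).choose j : ℂ)
          * (t ^ (j + 1) + t ^ j) with hG
  have h1 : (t - 1) ^ (2 * n + 1) * (t + 1) = ∑ j ∈ range (2 * n + 2), G j := by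
    have hb : (t + (-1)) ^ (2 * n + 1)
        = ∑ j ∈ range (2 * n + 2), t ^ j * (-1 : ℂ) ^ (2 * n + 1 - j) * ((2 * n + 1).choose j : ℂ) := by
      rw [add_pow]
    rw [show t - 1 = t + (-1) from by ring, hb, Finset.sum_mul]
    exact Finset.sum_congr rfl fun j hj => by simp only [hG]; ring
  have hsplit : ∑ j ∈ range (2 * n + 2), G j
      = ∑ j ∈ range (n + 1), G j + ∑ j ∈ range (n + 1), G (n + 1 + (n + 1 - 1 - j)) := by
    rw [← Finset.sum_range_add_sum_Ico _ (show n + 1 ≤ 2 * n + 2 by omega)]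
    congr 1
    rw [Finset.sum_Ico_eq_sum_range]
    have h2 : 2 * n + 2 - (n + 1) = n + 1 := by omega
    rw [h2, ← Finset.sum_range_reflect (fun j => G (n + 1 + j)) (n + 1)]
  rw [h1, hsplit, ← Finset.sum_add_distrib]
  apply Finset.sum_congr rfl
  intro k hk
  simp only [Finset.mem_range] at hk
  have hk' : k ≤ n := by omega
  have i1 : n + 1 + (n + 1 - 1 - k) = 2 * n + 1 - k := by omega
  rw [i1]
  simp only [hG]
  have e1 : 2 * n + 1 - (2 * n + 1 - k) = k := by omega
  have e2 : (2 * n + 1).choose (2 * n + 1 - k) = (2 * n + 1).choose k :=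
    Nat.choose_symm (by omega)
  have e3 : (2 * n + 1 - k) + 1 = 2 * n + 2 - k := by omega
  have e4 : (-1 : ℂ) ^ (2 * n + 1 - k) = -(-1 : ℂ) ^ k := by
    have h5 : (-1 : ℂ) ^ (2 * n + 1 - k) * (-1 : ℂ) ^ k = (-1 : ℂ) ^ (2 * n + 1) := by
      rw [← pow_add]; congr 1; omega
    have h2 : (-1 : ℂ) ^ (2 * n + 1) = -1 := by
      rw [pow_succ, pow_mul]; simp
    have h3 : (-1 : ℂ) ^ k * (-1 : ℂ) ^ k = 1 := by
      rw [← pow_add, ← two_mul, pow_mul]; simp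
    calc (-1 : ℂ) ^ (2 * n + 1 - k) = (-1 : ℂ) ^ (2 * n + 1 - k) * ((-1 : ℂ) ^ k * (-1 : ℂ) ^ k) := by rw [h3, mul_one]
    _ = ((-1 : ℂ) ^ (2 * n + 1)) * (-1 : ℂ) ^ k := by rw [← mul_assoc, h5]
    _ = -(-1 : ℂ) ^ k := by rw [h2]; ring
  rw [e1, e2, e3, e4]
  ring


lemma key_id (n : ℕ) (u v : ℂ) (h : u * v = 1) :
    (u - v) ^ (2 * n + 1) * (u + v) =
      ∑ k ∈ range (n + 1), (-1 : ℂ) ^ k * ((2 * n + 1).choose k : ℂ) *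
        (u ^ (2 * n + 2 - 2 * k) + u ^ (2 * n - 2 * k)
          - v ^ (2 * n - 2 * k) - v ^ (2 * n + 2 - 2 * k)) := by
  have hu : u ≠ 0 := fun h0 => by simp [h0] at h
  have hpow : (u : ℂ) ^ (2 * n + 2) ≠ 0 := pow_ne_zero _ hu
  apply mul_right_cancel₀ hpow
  have LHS : (u - v) ^ (2 * n + 1) * (u + v) * u ^ (2 * n + 2)
      = (u ^ 2 - 1) ^ (2 * n + 1) * (u ^ 2 + 1) := by
    have e1 : u ^ (2 * n + 2) = u ^ (2 * n + 1) * u := by rw [← pow_succ]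
    have e2 : (u - v) ^ (2 * n + 1) * u ^ (2 * n + 1) = (u ^ 2 - 1) ^ (2 * n + 1) := by
      rw [← mul_pow]
      congr 1
      have : (u - v) * u = u ^ 2 - v * u := by ring
      rw [this, mul_comm v u, h]
    calc (u - v) ^ (2 * n + 1) * (u + v) * u ^ (2 * n + 2)
        = ((u - v) ^ (2 * n + 1) * u ^ (2 * n + 1)) * ((u + v) * u) := by rw [e1]; ring
      _ = (u ^ 2 - 1) ^ (2 * n + 1) * (u ^ 2 + 1) := by
          rw [e2]
          congr 1
          have : (u + v) * u = u ^ 2 + v * u := by ring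
          rw [this, mul_comm v u, h]
  rw [LHS, poly_id n (u ^ 2), Finset.sum_mul]
  apply Finset.sum_congr rfl
  intro k hk
  simp only [Finset.mem_range] at hk
  have hk' : k ≤ n := by omega
  have huv : ∀ m : ℕ, v ^ m * u ^ m = 1 := fun m => by
    rw [← mul_pow, mul_comm v u, h, one_pow]
  have p1 : u ^ (2 * n + 2 - 2 * k) * u ^ (2 * n + 2) = (u ^ 2) ^ (2 * n + 2 - k) := by
    rw [← pow_add, ← pow_mul]; congr 1; omega
  have p2 : u ^ (2 * n - 2 * k) * u ^ (2 * n + 2) = (u ^ 2) ^ (2 * n + 1 - k) := by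
    rw [← pow_add, ← pow_mul]; congr 1; omega
  have p3 : v ^ (2 * n - 2 * k) * u ^ (2 * n + 2) = (u ^ 2) ^ (k + 1) := by
    have : u ^ (2 * n + 2) = u ^ (2 * n - 2 * k) * u ^ (2 * k + 2) := by
      rw [← pow_add]; congr 1; omega
    rw [this, ← mul_assoc, huv, one_mul, ← pow_mul]; congr 1
  have p4 : v ^ (2 * n + 2 - 2 * k) * u ^ (2 * n + 2) = (u ^ 2) ^ k := by
    have : u ^ (2 * n + 2) = u ^ (2 * n + 2 - 2 * k) * u ^ (2 * k) := by
      rw [← pow_add]; congr 1; omega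
    rw [this, ← mul_assoc, huv, one_mul, ← pow_mul]
  calc (-1 : ℂ) ^ k * ((2 * n + 1).choose k : ℂ) *
        ((u ^ 2) ^ (2 * n + 2 - k) + (u ^ 2) ^ (2 * n + 1 - k) - (u ^ 2) ^ k - (u ^ 2) ^ (k + 1))
      = (-1 : ℂ) ^ k * ((2 * n + 1).choose k : ℂ) *
        (u ^ (2 * n + 2 - 2 * k) * u ^ (2 * n + 2) + u ^ (2 * n - 2 * k) * u ^ (2 * n + 2)
          - v ^ (2 * n + 2 - 2 * k) * u ^ (2 * n + 2) - v ^ (2 * n - 2 * k) * u ^ (2 * n + 2)) := by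
        rw [p1, p2, p3, p4]
    _ = _ := by ring


lemma trig_id (n : ℕ) (w : ℂ) :
    Complex.sin w ^ (2 * n + 1) * Complex.cos w =
      ((-1 : ℂ) ^ n / 2 ^ (2 * n + 1)) * ∑ k ∈ range (n + 1),
        (-1 : ℂ) ^ k * ((2 * n + 1).choose k : ℂ) *
          (Complex.sin (((2 * n + 2 - 2 * k : ℕ) : ℂ) * w)
            + Complex.sin (((2 * n - 2 * k : ℕ) : ℂ) * w)) := by
  set u := Complex.exp (w * I) with hu
  set v := Complex.exp (-(w * I)) with hv
  have huv : u * v = 1 := by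
    rw [hu, hv, ← Complex.exp_add, add_neg_cancel, Complex.exp_zero]
  have hsin : ∀ m : ℕ, Complex.sin ((m : ℂ) * w) = (v ^ m - u ^ m) * I / 2 := by
    intro m
    have h1 : (m : ℂ) * w * I = (m : ℂ) * (w * I) := by ring
    have h2 : -((m : ℂ) * w) * I = (m : ℂ) * (-(w * I)) := by ring
    rw [Complex.sin, h2, h1, Complex.exp_nat_mul, Complex.exp_nat_mul, ← hu, ← hv]
  have hsinw : Complex.sin w = (v - u) * I / 2 := by
    rw [Complex.sin, hv, hu, neg_mul]
  have hcosw : Complex.cos w = (u + v) / 2 := by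
    rw [Complex.cos, hv, hu, neg_mul]
  have hR : ∑ k ∈ range (n + 1), (-1 : ℂ) ^ k * ((2 * n + 1).choose k : ℂ) *
        (Complex.sin (((2 * n + 2 - 2 * k : ℕ) : ℂ) * w)
            + Complex.sin (((2 * n - 2 * k : ℕ) : ℂ) * w))
      = (-(I / 2)) * ∑ k ∈ range (n + 1), (-1 : ℂ) ^ k * ((2 * n + 1).choose k : ℂ) *
        (u ^ (2 * n + 2 - 2 * k) + u ^ (2 * n - 2 * k)
          - v ^ (2 * n - 2 * k) - v ^ (2 * n + 2 - 2 * k)) := by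
    rw [Finset.mul_sum]
    refine Finset.sum_congr rfl fun k _ => ?_
    rw [hsin, hsin]
    ring
  rw [hsinw, hcosw, hR, ← key_id n u v huv]
  have hvu : ((v - u) * I / 2) ^ (2 * n + 1)
      = -((u - v) ^ (2 * n + 1)) * ((-1 : ℂ) ^ n * I) / 2 ^ (2 * n + 1) := by
    rw [div_pow, mul_pow]
    have h1 : (v - u) ^ (2 * n + 1) = -((u - v) ^ (2 * n + 1)) := by
      rw [show v - u = -(u - v) from by ring, Odd.neg_pow ⟨n, by ring⟩]
    have h2 : (I : ℂ) ^ (2 * n + 1) = (-1 : ℂ) ^ n * I := by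
      rw [pow_succ, pow_mul, Complex.I_sq]
    rw [h1, h2]
  rw [hvu]
  ring


lemma trig_id_real (n : ℕ) (θ : ℝ) :
    Real.sin θ ^ (2 * n + 1) * Real.cos θ =
      ((-1 : ℝ) ^ n / 2 ^ (2 * n + 1)) * ∑ k ∈ range (n + 1),
        (-1 : ℝ) ^ k * ((2 * n + 1).choose k : ℝ) *
          (Real.sin (((2 * n + 2 - 2 * k : ℕ) : ℝ) * θ)
            + Real.sin (((2 * n - 2 * k : ℕ) : ℝ) * θ)) := by
  have h := trig_id n (θ : ℂ)
  apply Complex.ofReal_injective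
  push_cast
  push_cast at h
  convert h using 2


lemma Si_zero : Si 0 = 0 := intervalIntegral.integral_same

lemma sinc_m_integrable (m : ℕ) :
    IntervalIntegrable (fun θ : ℝ => Real.sin (m * θ) / θ) volume 0 (π / 2) := by
  rw [intervalIntegrable_iff]
  have hI : Set.uIoc (0:ℝ) (π/2) = Set.Ioc 0 (π/2) := Set.uIoc_of_le (by positivity)
  refine MeasureTheory.Integrable.mono' (g := fun _ => (m : ℝ)) ?_ ?_ ?_
  · rw [hI]
    exact MeasureTheory.integrableOn_const measure_Ioc_lt_top.ne
  · exact ((Real.measurable_sin.comp (measurable_const.mul measurable_id)).div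
      measurable_id).aestronglyMeasurable
  · refine Filter.Eventually.of_forall fun θ => ?_
    rw [Real.norm_eq_abs]
    rcases eq_or_ne θ 0 with h | h
    · simp [h]
    · rw [abs_div, div_le_iff₀ (abs_pos.mpr h)]
      calc |Real.sin (m * θ)| ≤ |(m : ℝ) * θ| := Real.abs_sin_le_abs
        _ = m * |θ| := by rw [abs_mul, Nat.abs_cast]

lemma si_integral_eq (m : ℕ) :
    ∫ θ in (0:ℝ)..(π/2), Real.sin (m * θ) / θ = Si (m * (π / 2)) := by
  rcases Nat.eq_zero_or_pos m with hm | hm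
  · simp [hm, Si_zero]
  have hm' : (m : ℝ) ≠ 0 := Nat.cast_ne_zero.mpr hm.ne'
  have hpt : ∀ θ : ℝ, Real.sin (m * θ) / θ = (m : ℝ) * (Real.sin (m * θ) / (m * θ)) := by
    intro θ
    rcases eq_or_ne θ 0 with h | h
    · simp [h]
    · field_simp
  simp only [hpt]
  rw [intervalIntegral.integral_const_mul]
  have h2 : ∫ x in (0:ℝ)..(π/2), Real.sin (m * x) / (m * x)
      = (m : ℝ)⁻¹ • ∫ x in (0:ℝ)..((m : ℝ) * (π/2)), Real.sin x / x := by
    have := intervalIntegral.integral_comp_mul_left (a := (0:ℝ)) (b := π/2)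
      (fun t => Real.sin t / t) hm'
    simpa using this
  rw [h2, smul_eq_mul, ← mul_assoc, mul_inv_cancel₀ hm', one_mul]
  rfl


noncomputable def sfun : ℝ → ℝ := fun x => if x = 0 then 1 else x / Real.arcsin x

lemma sfun_contOn : ContinuousOn sfun (Set.Icc (0:ℝ) 1) := by
  intro x hx
  rcases eq_or_ne x 0 with h0 | h0
  · subst h0
    rw [← continuousWithinAt_diff_self]
    have hslope : Filter.Tendsto (fun y : ℝ => Real.arcsin y / y) (nhdsWithin 0 {(0:ℝ)}ᶜ) (nhds 1) := by
      have hd : HasDerivAt Real.arcsin 1 0 := by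
        have := Real.hasDerivAt_arcsin (by norm_num : (0:ℝ) ≠ -1) (by norm_num : (0:ℝ) ≠ 1)
        simpa using this
      have := hasDerivAt_iff_tendsto_slope.mp hd
      refine this.congr' ?_
      filter_upwards [self_mem_nhdsWithin] with y hy
      simp [slope_def_field, div_eq_iff, hy]
    have htends : Filter.Tendsto sfun (nhdsWithin 0 {(0:ℝ)}ᶜ) (nhds 1) := by
      have h2 : Filter.Tendsto (fun y : ℝ => (Real.arcsin y / y)⁻¹) (nhdsWithin 0 {(0:ℝ)}ᶜ) (nhds 1) := by
        simpa using hslope.inv₀ (by norm_num)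
      refine h2.congr' ?_
      filter_upwards [self_mem_nhdsWithin] with y hy
      simp only [Set.mem_compl_iff, Set.mem_singleton_iff] at hy
      rw [sfun, if_neg hy, inv_div]
    have : sfun 0 = 1 := by rw [sfun]; simp
    rw [ContinuousWithinAt, this]
    exact htends.mono_left (nhdsWithin_mono _ (by intro y hy; exact hy.2))
  · have hpos : 0 < x := lt_of_le_of_ne hx.1 (Ne.symm h0)
    have harc : Real.arcsin x ≠ 0 := ne_of_gt (Real.arcsin_pos.mpr hpos)
    have : ContinuousAt sfun x := by
      have hev : sfun =ᶠ[nhds x] fun y => y / Real.arcsin y := by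
        filter_upwards [eventually_ne_nhds h0] with y hy
        rw [sfun, if_neg hy]
      refine ContinuousAt.congr ?_ hev.symm
      exact ContinuousAt.div continuousAt_id (Real.continuous_arcsin.continuousAt) harc
    exact this.continuousWithinAt

lemma subst_eq (n : ℕ) :
    ∫ x in (0:ℝ)..1, x ^ (2 * n + 1) / Real.arcsin x
      = ∫ θ in (0:ℝ)..(π/2), Real.sin θ ^ (2 * n + 1) * Real.cos θ / θ := by
  set g : ℝ → ℝ := fun x => x ^ (2 * n) * sfun x with hg
  have hgcont : ContinuousOn g (Set.Icc (0:ℝ) 1) :=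
    (continuous_pow (2 * n)).continuousOn.mul sfun_contOn
  have himg : Real.sin '' (Set.uIcc (0:ℝ) (π/2)) ⊆ Set.Icc (0:ℝ) 1 := by
    rintro y ⟨θ, hθ, rfl⟩
    rw [Set.uIcc_of_le (by positivity)] at hθ
    exact ⟨Real.sin_nonneg_of_nonneg_of_le_pi hθ.1 (hθ.2.trans (by linarith [Real.pi_pos])),
      Real.sin_le_one θ⟩
  have h1 : (∫ θ in (0:ℝ)..(π/2), Real.cos θ • (g ∘ Real.sin) θ)
      = ∫ x in (Real.sin 0)..(Real.sin (π/2)), g x :=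
    intervalIntegral.integral_comp_smul_deriv' (fun θ _ => Real.hasDerivAt_sin θ)
      Real.continuous_cos.continuousOn (hgcont.mono himg)
  rw [Real.sin_zero, Real.sin_pi_div_two] at h1
  have h2 : ∫ x in (0:ℝ)..1, g x = ∫ x in (0:ℝ)..1, x ^ (2 * n + 1) / Real.arcsin x := by
    apply intervalIntegral.integral_congr_ae
    refine Filter.Eventually.of_forall fun x hx => ?_
    rw [Set.uIoc_of_le (by norm_num : (0:ℝ) ≤ 1)] at hx
    have hx0 : x ≠ 0 := ne_of_gt hx.1
    rw [hg]
    simp only [sfun, if_neg hx0]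
    rw [mul_div_assoc', ← pow_succ]
  have h3 : (∫ θ in (0:ℝ)..(π/2), Real.cos θ • (g ∘ Real.sin) θ)
      = ∫ θ in (0:ℝ)..(π/2), Real.sin θ ^ (2 * n + 1) * Real.cos θ / θ := by
    apply intervalIntegral.integral_congr_ae
    refine Filter.Eventually.of_forall fun θ hθ => ?_
    rw [Set.uIoc_of_le (by positivity : (0:ℝ) ≤ π/2)] at hθ
    have hθ0 : 0 < θ := hθ.1
    have harc : Real.arcsin (Real.sin θ) = θ :=
      Real.arcsin_sin (by linarith [Real.pi_pos]) hθ.2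
    simp only [Function.comp, smul_eq_mul, hg, sfun]
    have hsin0 : Real.sin θ ≠ 0 :=
      ne_of_gt (Real.sin_pos_of_pos_of_lt_pi hθ0 (lt_of_le_of_lt hθ.2 (by linarith [Real.pi_pos])))
    rw [if_neg hsin0, harc, pow_succ]
    ring
  rw [← h2, ← h1, h3]


lemma sum_id (n : ℕ) (S : ℕ → ℝ) (hS0 : S 0 = 0) :
    ∑ k ∈ range (n + 1), ((-1:ℝ)) ^ (k + n) * ((2 * n + 1).choose k : ℝ) * (S (n + 1 - k) + S (n - k))
      = ∑ k ∈ range (n + 1), ((2 * n + 1).choose k : ℝ) *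
          ((2 * (n : ℝ) - 2 * k + 2) / (2 * (n : ℝ) - k + 2)) * S (n + 1 - k) * (-1) ^ (k + n) := by
  set D : ℕ → ℝ := fun k => (-1 : ℝ) ^ (k + n) * ((2 * n + 1).choose k : ℝ) with hD
  set R : ℕ → ℝ := fun k => ((2 * n + 1).choose k : ℝ) *
      ((2 * (n : ℝ) - 2 * k + 2) / (2 * (n : ℝ) - k + 2)) * (-1 : ℝ) ^ (k + n) with hR
  have hLHS : ∑ k ∈ range (n + 1), D k * (S (n + 1 - k) + S (n - k))
      = (∑ k ∈ range n, D (k + 1) * S (n - k) + D 0 * S (n + 1))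
        + ∑ k ∈ range n, D k * S (n - k) := by
    have e1 : ∑ k ∈ range (n + 1), D k * (S (n + 1 - k) + S (n - k))
        = ∑ k ∈ range (n + 1), D k * S (n + 1 - k) + ∑ k ∈ range (n + 1), D k * S (n - k) := by
      rw [← Finset.sum_add_distrib]
      exact Finset.sum_congr rfl fun k _ => by ring
    rw [e1]
    congr 1
    · rw [Finset.sum_range_succ' (fun k => D k * S (n + 1 - k)) n]
      simp only [Nat.succ_sub_succ, Nat.sub_zero]
    · rw [Finset.sum_range_succ]
      simp [hS0]
  have hRHS : ∑ k ∈ range (n + 1), R k * S (n + 1 - k)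
      = ∑ k ∈ range n, R (k + 1) * S (n - k) + R 0 * S (n + 1) := by
    rw [Finset.sum_range_succ' (fun k => R k * S (n + 1 - k)) n]
    simp only [Nat.succ_sub_succ, Nat.sub_zero]
  have hR0 : R 0 = D 0 := by
    simp only [hR, hD, Nat.cast_zero, mul_zero, sub_zero, zero_add]
    rw [div_self (by positivity)]
    ring
  have hkey : ∀ k, k < n → R (k + 1) = D (k + 1) + D k := by
    intro k hk
    have hch : ((2 * n + 1).choose (k + 1) : ℝ) * (k + 1)
        = ((2 * n + 1).choose k : ℝ) * (2 * (n : ℝ) + 1 - k) := by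
      have := Nat.choose_succ_right_eq (2 * n + 1) k
      have h2 : ((2 * n + 1 - k : ℕ) : ℝ) = 2 * (n : ℝ) + 1 - k := by
        rw [Nat.cast_sub (by omega)]
        push_cast
        ring
      calc ((2 * n + 1).choose (k + 1) : ℝ) * (k + 1)
          = (((2 * n + 1).choose (k + 1) * (k + 1) : ℕ) : ℝ) := by push_cast; ring
        _ = (((2 * n + 1).choose k * (2 * n + 1 - k) : ℕ) : ℝ) := by rw [this]
        _ = ((2 * n + 1).choose k : ℝ) * (2 * (n : ℝ) + 1 - k) := by
            push_cast [Nat.cast_sub (show k ≤ 2 * n + 1 by omega)]; ring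
    simp only [hR, hD]
    have hsgn : ((-1 : ℝ)) ^ (k + 1 + n) = -(-1 : ℝ) ^ (k + n) := by
      rw [show k + 1 + n = (k + n) + 1 by omega, pow_succ]
      ring
    rw [hsgn]
    push_cast
    have hden : 2 * (n : ℝ) - ((k : ℝ) + 1) + 2 ≠ 0 := by
      have hkn : (k : ℝ) < n := by exact_mod_cast hk
      nlinarith
    field_simp
    linear_combination hch
  calc ∑ k ∈ range (n + 1), D k * (S (n + 1 - k) + S (n - k))
      = (∑ k ∈ range n, D (k + 1) * S (n - k) + D 0 * S (n + 1))
        + ∑ k ∈ range n, D k * S (n - k) := hLHS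
    _ = ∑ k ∈ range n, (D (k + 1) + D k) * S (n - k) + D 0 * S (n + 1) := by
        rw [add_right_comm, ← Finset.sum_add_distrib]
        congr 1
        exact Finset.sum_congr rfl fun k _ => by ring
    _ = ∑ k ∈ range n, R (k + 1) * S (n - k) + R 0 * S (n + 1) := by
        rw [hR0]
        congr 1
        exact Finset.sum_congr rfl fun k hk => by
          rw [hkey k (Finset.mem_range.mp hk)]
    _ = ∑ k ∈ range (n + 1), R k * S (n + 1 - k) := hRHS.symm
    _ = _ := Finset.sum_congr rfl fun k _ => by rw [hR]; ring


end Aux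

theorem integral_pow_div_arcsin (n : ℕ) :
    ∫ x in (0:ℝ)..1, x ^ (2 * n + 1) / Real.arcsin x =
      (1 / 2 ^ (2 * n + 1)) * ∑ k ∈ Finset.range (n + 1),
        ((2 * n + 1).choose k : ℝ) * ((2 * (n : ℝ) - 2 * k + 2) / (2 * (n : ℝ) - k + 2)) *
          Si (π * ((n : ℝ) + 1 - k)) * (-1) ^ (k + n) := by
  classical
  set S : ℕ → ℝ := fun m => Si (π * m) with hS
  have hS0 : S 0 = 0 := by simp [hS, Si_zero]
  have hSa : ∀ k : ℕ, k ≤ n → Si (((2 * n + 2 - 2 * k : ℕ) : ℝ) * (π / 2)) = S (n + 1 - k) := by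
    intro k hk
    simp only [hS]
    congr 1
    rw [Nat.cast_sub (by omega : 2 * k ≤ 2 * n + 2), Nat.cast_sub (by omega : k ≤ n + 1)]
    push_cast
    ring
  have hSb : ∀ k : ℕ, k ≤ n → Si (((2 * n - 2 * k : ℕ) : ℝ) * (π / 2)) = S (n - k) := by
    intro k hk
    simp only [hS]
    congr 1
    rw [Nat.cast_sub (by omega : 2 * k ≤ 2 * n), Nat.cast_sub (by omega : k ≤ n)]
    push_cast
    ring
  have hpt : ∀ θ : ℝ, Real.sin θ ^ (2 * n + 1) * Real.cos θ / θ
      = ∑ k ∈ Finset.range (n + 1), (((-1 : ℝ) ^ n / 2 ^ (2 * n + 1)) *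
          ((-1 : ℝ) ^ k * ((2 * n + 1).choose k : ℝ))) *
          (Real.sin (((2 * n + 2 - 2 * k : ℕ) : ℝ) * θ) / θ
            + Real.sin (((2 * n - 2 * k : ℕ) : ℝ) * θ) / θ) := by
    intro θ
    rw [trig_id_real n θ, div_eq_mul_inv, Finset.mul_sum, Finset.sum_mul]
    exact Finset.sum_congr rfl fun k _ => by ring
  have hint : ∀ k ∈ Finset.range (n + 1),
      IntervalIntegrable (fun θ : ℝ => (((-1 : ℝ) ^ n / 2 ^ (2 * n + 1)) *
          ((-1 : ℝ) ^ k * ((2 * n + 1).choose k : ℝ))) *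
          (Real.sin (((2 * n + 2 - 2 * k : ℕ) : ℝ) * θ) / θ
            + Real.sin (((2 * n - 2 * k : ℕ) : ℝ) * θ) / θ)) MeasureTheory.volume 0 (π / 2) :=
    fun k _ => ((sinc_m_integrable (2 * n + 2 - 2 * k)).add
      (sinc_m_integrable (2 * n - 2 * k))).const_mul _
  calc ∫ x in (0:ℝ)..1, x ^ (2 * n + 1) / Real.arcsin x
      = ∫ θ in (0:ℝ)..(π/2), Real.sin θ ^ (2 * n + 1) * Real.cos θ / θ := subst_eq n
    _ = ∫ θ in (0:ℝ)..(π/2), ∑ k ∈ Finset.range (n + 1),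
          (((-1 : ℝ) ^ n / 2 ^ (2 * n + 1)) * ((-1 : ℝ) ^ k * ((2 * n + 1).choose k : ℝ))) *
          (Real.sin (((2 * n + 2 - 2 * k : ℕ) : ℝ) * θ) / θ
            + Real.sin (((2 * n - 2 * k : ℕ) : ℝ) * θ) / θ) := by
        exact intervalIntegral.integral_congr fun θ _ => hpt θ
    _ = ∑ k ∈ Finset.range (n + 1), ∫ θ in (0:ℝ)..(π/2),
          (((-1 : ℝ) ^ n / 2 ^ (2 * n + 1)) * ((-1 : ℝ) ^ k * ((2 * n + 1).choose k : ℝ))) *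
          (Real.sin (((2 * n + 2 - 2 * k : ℕ) : ℝ) * θ) / θ
            + Real.sin (((2 * n - 2 * k : ℕ) : ℝ) * θ) / θ) :=
        intervalIntegral.integral_finset_sum hint
    _ = ∑ k ∈ Finset.range (n + 1), (((-1 : ℝ) ^ n / 2 ^ (2 * n + 1)) *
          ((-1 : ℝ) ^ k * ((2 * n + 1).choose k : ℝ))) * (S (n + 1 - k) + S (n - k)) := by
        refine Finset.sum_congr rfl fun k hk => ?_
        have hk' : k ≤ n := by
          have := Finset.mem_range.mp hk
          omega
        rw [intervalIntegral.integral_const_mul,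
          intervalIntegral.integral_add (sinc_m_integrable _) (sinc_m_integrable _),
          si_integral_eq, si_integral_eq, hSa k hk', hSb k hk']
    _ = (1 / 2 ^ (2 * n + 1)) * ∑ k ∈ Finset.range (n + 1),
          (-1 : ℝ) ^ (k + n) * ((2 * n + 1).choose k : ℝ) * (S (n + 1 - k) + S (n - k)) := by
        rw [Finset.mul_sum]
        refine Finset.sum_congr rfl fun k _ => ?_
        rw [pow_add]
        ring
    _ = (1 / 2 ^ (2 * n + 1)) * ∑ k ∈ Finset.range (n + 1),
          ((2 * n + 1).choose k : ℝ) * ((2 * (n : ℝ) - 2 * k + 2) / (2 * (n : ℝ) - k + 2)) *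
          S (n + 1 - k) * (-1) ^ (k + n) := by
        rw [sum_id n S hS0]
    _ = _ := by
        congr 1
        refine Finset.sum_congr rfl fun k hk => ?_
        have hk' : k ≤ n := by
          have := Finset.mem_range.mp hk
          omega
        have : ((n + 1 - k : ℕ) : ℝ) = (n : ℝ) + 1 - k := by
          rw [Nat.cast_sub (by omega : k ≤ n + 1)]
          push_cast
          ring
        simp only [hS, this]
end

section
/- Let Si denote the sine integral, Si(z) = ∫₀^z (sin t)/t dt, and let arcsin denote the real inverse sine function. For every natural number n, the function F(x) = (1/2^{2n+1}) · Σ_{k=0}^n C(2n+1, k) · ((2n-2k+2)/(2n-k+2)) · Si((2n+2-2k) · arcsin(x)) · (-1)^{k+n} satisfies F'(x) = x^{2n+1} / arcsin(x) for all x in the open interval (0, 1), where C(n,k) denotes the binomial coefficient. -/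
open Real

lemma aux_sin_mul (z : ℂ) : Complex.sin z * (2*Complex.I)
    = Complex.exp (z*Complex.I) - Complex.exp (-(z*Complex.I)) := by
  rw [Complex.sin]
  rw [show -(z*Complex.I) = -z*Complex.I by ring]
  linear_combination (Complex.exp (-z*Complex.I) - Complex.exp (z*Complex.I)) * Complex.I_mul_I

lemma aux_cos_mul (z : ℂ) : Complex.cos z * 2
    = Complex.exp (z*Complex.I) + Complex.exp (-(z*Complex.I)) := by
  rw [Complex.cos, show -(z*Complex.I) = -z*Complex.I by ring]
  ring

lemma aux_neg_one_pow_sub (k n : ℕ) (h : k ≤ 2*n+1) :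
    ((-1:ℂ))^(2*n+1-k) = -(-1)^k := by
  rcases Nat.even_or_odd k with he | ho
  · have : Odd (2*n+1-k) := by
      rw [Nat.odd_iff]; rw [Nat.even_iff] at he; omega
    rw [this.neg_one_pow, he.neg_one_pow]
  · have : Even (2*n+1-k) := by
      rw [Nat.even_iff]; rw [Nat.odd_iff] at ho; omega
    rw [this.neg_one_pow, ho.neg_one_pow]; norm_num

lemma aux_sumIII (n : ℕ) (u : ℂ) :
    ∑ k ∈ Finset.range (n+1), (-1)^k * ((2*n+1).choose k : ℂ) * (u^(2*n+1-k) - u^k)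
      = (u - 1)^(2*n+1) := by
  have expand : (u - 1)^(2*n+1)
      = ∑ k ∈ Finset.range (2*n+1+1), u^k * (-1)^(2*n+1-k) * ((2*n+1).choose k : ℂ) := by
    rw [sub_eq_add_neg, add_pow]
  set F : ℕ → ℂ := fun k => u^k * (-1)^(2*n+1-k) * ((2*n+1).choose k : ℂ) with hF
  have h1 : 2*n+1+1 = (n+1) + (n+1) := by omega
  have split : ∑ k ∈ Finset.range (2*n+1+1), F k
      = ∑ k ∈ Finset.range (n+1), F k + ∑ k ∈ Finset.range (n+1), F (2*n+1-k) := by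
    rw [h1, Finset.sum_range_add]
    congr 1
    rw [← Finset.sum_range_reflect]
    refine Finset.sum_congr rfl fun k hk => ?_
    congr 1
    have := Finset.mem_range.1 hk
    omega
  rw [expand, split, ← Finset.sum_add_distrib]
  refine Finset.sum_congr rfl fun k hk => ?_
  have hk' : k ≤ n := by have := Finset.mem_range.1 hk; omega
  have e1 : 2*n+1-(2*n+1-k) = k := by omega
  have e2 : (2*n+1).choose (2*n+1-k) = (2*n+1).choose k :=
    Nat.choose_symm_of_eq_add (by omega)
  simp only [hF, e1, e2, aux_neg_one_pow_sub k n (by omega)]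
  ring

lemma aux_sumI (n : ℕ) (u : ℂ) :
    ∑ k ∈ Finset.range (n+1), (-1)^k * (((2*n+1).choose k : ℂ) *
        ((2*(n:ℂ) - 2*(k:ℂ) + 2)/(2*(n:ℂ) - (k:ℂ) + 2))) * (u^(2*n+2-k) - u^k)
      = (u - 1)^(2*n+1) * (u + 1) := by
  have hden : ∀ k : ℕ, k ≤ n → (2*(n:ℂ) - (k:ℂ) + 2) ≠ 0 := by
    intro k hk
    have h1 : (2*(n:ℂ) - (k:ℂ) + 2) = ((2*n - k + 2 : ℕ) : ℂ) := by
      push_cast [Nat.cast_sub (show k ≤ 2*n by omega)]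
      ring
    rw [h1]
    exact Nat.cast_ne_zero.2 (by omega)
  have step1 : ∑ k ∈ Finset.range (n+1), (-1)^k * (((2*n+1).choose k : ℂ) *
        ((2*(n:ℂ) - 2*(k:ℂ) + 2)/(2*(n:ℂ) - (k:ℂ) + 2))) * (u^(2*n+2-k) - u^k)
      = ∑ k ∈ Finset.range (n+1), (-1)^k * ((2*n+1).choose k : ℂ) * (u^(2*n+2-k) - u^k)
        - ∑ k ∈ Finset.range (n+1), (-1)^k * (((2*n+1).choose k : ℂ) * (k:ℂ) / (2*(n:ℂ) - (k:ℂ) + 2)) * (u^(2*n+2-k) - u^k) := by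
    rw [← Finset.sum_sub_distrib]
    refine Finset.sum_congr rfl fun k hk => ?_
    have hk' : k ≤ n := by have := Finset.mem_range.1 hk; omega
    field_simp [hden k hk']
    ring
  have step2 : ∑ k ∈ Finset.range (n+1), (-1)^k * (((2*n+1).choose k : ℂ) * (k:ℂ) / (2*(n:ℂ) - (k:ℂ) + 2)) * (u^(2*n+2-k) - u^k)
      = -∑ k ∈ Finset.range (n+1), (-1)^k * ((2*n+1).choose k : ℂ) * (u^(2*n+1-k) - u^(k+1)) := by
    rw [Finset.sum_range_succ' _ n]
    simp only [Nat.cast_zero, mul_zero, zero_mul, zero_div, add_zero]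
    rw [Finset.sum_range_succ (fun k => (-1:ℂ)^k * ((2*n+1).choose k : ℂ) * (u^(2*n+1-k) - u^(k+1)))]
    have hlast : ((-1:ℂ)^n * ((2*n+1).choose n : ℂ) * (u^(2*n+1-n) - u^(n+1))) = 0 := by
      have : 2*n+1-n = n+1 := by omega
      rw [this]; ring
    rw [hlast, add_zero, ← Finset.sum_neg_distrib]
    refine Finset.sum_congr rfl fun k hk => ?_
    have hk' : k + 1 ≤ n := by have := Finset.mem_range.1 hk; omega
    have hd := hden (k+1) hk'
    have hch : ((2*n+1).choose (k+1) : ℂ) * ((k+1 : ℕ):ℂ) = ((2*n+1).choose k : ℂ) * (2*(n:ℂ) - ((k+1:ℕ):ℂ) + 2) := by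
      have h2 := Nat.choose_succ_right_eq (2*n+1) k
      have hcast : (((2*n+1).choose (k+1) * (k+1) : ℕ) : ℂ) = (((2*n+1).choose k * (2*n+1-k) : ℕ) : ℂ) := by
        exact_mod_cast congrArg (Nat.cast : ℕ → ℂ) h2
      push_cast [Nat.cast_sub (show k ≤ 2*n+1 by omega)] at hcast
      push_cast
      linear_combination hcast
    have hcoef : ((2*n+1).choose (k+1) : ℂ) * ((k+1 : ℕ):ℂ) / (2*(n:ℂ) - ((k+1:ℕ):ℂ) + 2) = ((2*n+1).choose k : ℂ) := by
      rw [div_eq_iff hd]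
      exact hch
    have hexp : 2*n+2-(k+1) = 2*n+1-k := by omega
    rw [hexp, hcoef]
    ring
  rw [step1, step2, sub_neg_eq_add, ← Finset.sum_add_distrib]
  have merge : ∀ k ∈ Finset.range (n+1),
      (-1:ℂ)^k * ((2*n+1).choose k : ℂ) * (u^(2*n+2-k) - u^k)
        + (-1)^k * ((2*n+1).choose k : ℂ) * (u^(2*n+1-k) - u^(k+1))
      = (u+1) * ((-1)^k * ((2*n+1).choose k : ℂ) * (u^(2*n+1-k) - u^k)) := by
    intro k hk
    have hk' : k ≤ n := by have := Finset.mem_range.1 hk; omega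
    rw [show 2*n+2-k = (2*n+1-k)+1 from by omega, pow_succ]
    ring
  rw [Finset.sum_congr rfl merge, ← Finset.mul_sum, aux_sumIII]
  ring

lemma aux_key (n : ℕ) (θ : ℝ) :
    ∑ k ∈ Finset.range (n+1), (((2*n+1).choose k : ℝ) * ((2*(n:ℝ) - 2*(k:ℝ) + 2)/(2*(n:ℝ) - (k:ℝ) + 2)) * (-1)^(k+n)) * Real.sin (((2*(n-k)+2 : ℕ):ℝ) * θ)
      = 2^(2*n+1) * Real.sin θ ^ (2*n+1) * Real.cos θ := by
  apply Complex.ofReal_injective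
  push_cast
  set w : ℂ := Complex.exp (θ * Complex.I) with hw
  have hw0 : w ≠ 0 := Complex.exp_ne_zero _
  set u : ℂ := w^2 with hu
  have hu0 : u ≠ 0 := pow_ne_zero _ hw0
  have hM : (2*Complex.I*u^(n+1)) ≠ 0 := by
    simp [Complex.I_ne_zero, hu0]
  refine mul_right_cancel₀ hM ?_
  rw [Finset.sum_mul]
  have hterm : ∀ k ∈ Finset.range (n+1),
      (((2*n+1).choose k : ℂ) * ((2*(n:ℂ) - 2*(k:ℂ) + 2)/(2*(n:ℂ) - (k:ℂ) + 2)) * (-1)^(k+n) *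
          Complex.sin ((2*((n-k : ℕ):ℂ) + 2) * (θ:ℂ))) * (2*Complex.I*u^(n+1))
      = (-1)^n * ((-1)^k * (((2*n+1).choose k : ℂ) *
          ((2*(n:ℂ) - 2*(k:ℂ) + 2)/(2*(n:ℂ) - (k:ℂ) + 2))) * (u^(2*n+2-k) - u^k)) := by
    intro k hk
    have hkn : k ≤ n := by have := Finset.mem_range.1 hk; omega
    set m : ℕ := 2*(n-k)+2 with hm
    have hmc : (2*((n-k : ℕ):ℂ) + 2) = (m:ℂ) := by push_cast [hm]; ring
    have e1 : Complex.exp (((m:ℂ)*(θ:ℂ))*Complex.I) = w^m := by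
      rw [mul_assoc, Complex.exp_nat_mul]
    have e2 : Complex.exp (-(((m:ℂ)*(θ:ℂ))*Complex.I)) = (w^m)⁻¹ := by
      rw [Complex.exp_neg, mul_assoc, Complex.exp_nat_mul]
    have e3 : Complex.sin ((m:ℂ)*(θ:ℂ)) * (2*Complex.I) = w^m - (w^m)⁻¹ := by
      rw [aux_sin_mul, e1, e2]
    have e4 : w^m * w^(2*n+2) = u^(2*n+2-k) := by
      rw [← pow_add, hu, ← pow_mul]
      congr 1
      omega
    have e5 : (w^m)⁻¹ * w^(2*n+2) = u^k := by
      have h7 : w^(2*n+2) = w^m * (w^2)^k := by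
        rw [← pow_mul, ← pow_add]
        congr 1
        omega
      rw [h7, inv_mul_cancel_left₀ (pow_ne_zero _ hw0), ← hu]
    have e6 : u^(n+1) = w^(2*n+2) := by
      rw [hu, ← pow_mul]
      congr 1
    have key : Complex.sin ((m:ℂ)*(θ:ℂ)) * (2*Complex.I) * u^(n+1) = u^(2*n+2-k) - u^k := by
      rw [e3, e6, sub_mul, e4, e5]
    rw [hmc]
    calc (((2*n+1).choose k : ℂ) * ((2*(n:ℂ) - 2*(k:ℂ) + 2)/(2*(n:ℂ) - (k:ℂ) + 2)) * (-1)^(k+n) *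
          Complex.sin ((m:ℂ)*(θ:ℂ))) * (2*Complex.I*u^(n+1))
        = ((2*n+1).choose k : ℂ) * ((2*(n:ℂ) - 2*(k:ℂ) + 2)/(2*(n:ℂ) - (k:ℂ) + 2)) * (-1)^(k+n) *
            (Complex.sin ((m:ℂ)*(θ:ℂ)) * (2*Complex.I) * u^(n+1)) := by ring
      _ = ((2*n+1).choose k : ℂ) * ((2*(n:ℂ) - 2*(k:ℂ) + 2)/(2*(n:ℂ) - (k:ℂ) + 2)) * (-1)^(k+n) *
            (u^(2*n+2-k) - u^k) := by rw [key]
      _ = (-1)^n * ((-1)^k * (((2*n+1).choose k : ℂ) *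
          ((2*(n:ℂ) - 2*(k:ℂ) + 2)/(2*(n:ℂ) - (k:ℂ) + 2))) * (u^(2*n+2-k) - u^k)) := by
          rw [pow_add]; ring
  rw [Finset.sum_congr rfl hterm, ← Finset.mul_sum, aux_sumI]
  have h1 : u - 1 = Complex.sin (θ:ℂ) * (2*Complex.I) * w := by
    rw [aux_sin_mul]
    rw [sub_mul, Complex.exp_neg, inv_mul_cancel₀ hw0, hu]
    ring
  have h2 : u + 1 = Complex.cos (θ:ℂ) * 2 * w := by
    rw [aux_cos_mul, add_mul, Complex.exp_neg, inv_mul_cancel₀ hw0, hu]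
    ring
  have hI : Complex.I^(2*n+1) = (-1)^n * Complex.I := by
    rw [pow_succ, pow_mul, Complex.I_sq]
  have e6 : u^(n+1) = w^(2*n+2) := by
    rw [hu, ← pow_mul]
    congr 1
  rw [h1, h2, mul_pow, mul_pow, mul_pow, hI, e6,
    show 2*n+2 = (2*n+1)+1 from by omega, pow_succ]
  have hEven : ((-1:ℂ)^n)^2 = 1 := by
    rw [← pow_mul]
    exact Even.neg_one_pow ⟨n, by ring⟩
  linear_combination (Complex.sin (θ:ℂ)^(2*n+1) * Complex.cos (θ:ℂ) * 2^(2*n+1) * 2 * Complex.I * w^(2*n+1) * w) * hEven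

lemma Si_hasDerivAt {z : ℝ} (hz : 0 < z) : HasDerivAt Si (Real.sin z / z) z := by
  have hmeas : Measurable fun t : ℝ => Real.sin t / t :=
    Real.measurable_sin.div measurable_id
  have hbound : ∀ t : ℝ, ‖Real.sin t / t‖ ≤ 1 := by
    intro t
    rcases eq_or_ne t 0 with rfl | ht
    · simp
    · rw [norm_div, Real.norm_eq_abs, Real.norm_eq_abs, div_le_one (abs_pos.2 ht)]
      exact Real.abs_sin_le_abs
  have hint : IntervalIntegrable (fun t : ℝ => Real.sin t / t) MeasureTheory.volume 0 z := by
    rw [intervalIntegrable_iff]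
    exact MeasureTheory.Measure.integrableOn_of_bounded (M := 1)
      measure_Ioc_lt_top.ne hmeas.aestronglyMeasurable
      (MeasureTheory.ae_of_all _ hbound)
  have hsm : StronglyMeasurableAtFilter (fun t : ℝ => Real.sin t / t) (nhds z) :=
    ⟨Set.univ, Filter.univ_mem, hmeas.aestronglyMeasurable.restrict⟩
  have hcont : ContinuousAt (fun t : ℝ => Real.sin t / t) z :=
    Real.continuous_sin.continuousAt.div continuousAt_id (ne_of_gt hz)
  exact intervalIntegral.integral_hasDerivAt_right hint hsm hcont

theorem hasDerivAt_antiderivative_pow_odd_div_arcsin (n : ℕ) :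
    ∀ x ∈ Set.Ioo (0 : ℝ) 1,
      HasDerivAt (fun x : ℝ =>
          (1 / 2 ^ (2 * n + 1)) * ∑ k ∈ Finset.range (n + 1),
            ((2 * n + 1).choose k : ℝ) * ((2 * (n : ℝ) - 2 * k + 2) / (2 * (n : ℝ) - k + 2)) *
              Si ((2 * (n : ℝ) + 2 - 2 * k) * Real.arcsin x) * (-1) ^ (k + n))
        (x ^ (2 * n + 1) / Real.arcsin x) x := by
  intro x hx
  obtain ⟨hx0, hx1⟩ := hx
  set θ := Real.arcsin x with hθdef
  have hθ : 0 < θ := Real.arcsin_pos.2 hx0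
  have hsin : Real.sin θ = x := Real.sin_arcsin (by linarith) (le_of_lt hx1)
  have hcos : Real.cos θ = Real.sqrt (1 - x^2) := Real.cos_arcsin x
  have hsq : (0:ℝ) < 1 - x^2 := by nlinarith
  have hsqrt : 0 < Real.sqrt (1-x^2) := Real.sqrt_pos.2 hsq
  have hda : HasDerivAt Real.arcsin (1 / Real.sqrt (1 - x^2)) x :=
    Real.hasDerivAt_arcsin (by linarith) (ne_of_lt hx1)
  have hc : ∀ k : ℕ, k ≤ n → (0:ℝ) < 2*(n:ℝ) + 2 - 2*k := by
    intro k hk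
    have : (k:ℝ) ≤ n := by exact_mod_cast hk
    linarith
  have heach : ∀ k ∈ Finset.range (n+1),
      HasDerivAt (fun x : ℝ =>
          ((2 * n + 1).choose k : ℝ) * ((2 * (n : ℝ) - 2 * k + 2) / (2 * (n : ℝ) - k + 2)) *
            Si ((2 * (n : ℝ) + 2 - 2 * k) * Real.arcsin x) * (-1) ^ (k + n))
        (((2 * n + 1).choose k : ℝ) * ((2 * (n : ℝ) - 2 * k + 2) / (2 * (n : ℝ) - k + 2)) *
          (Real.sin ((2 * (n : ℝ) + 2 - 2 * k) * θ) / ((2 * (n : ℝ) + 2 - 2 * k) * θ) *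
            ((2 * (n : ℝ) + 2 - 2 * k) * (1 / Real.sqrt (1 - x^2)))) * (-1) ^ (k + n)) x := by
    intro k hk
    have hkn : k ≤ n := by have := Finset.mem_range.1 hk; omega
    have hck := hc k hkn
    have hz : 0 < (2 * (n : ℝ) + 2 - 2 * k) * θ := mul_pos hck hθ
    have inner : HasDerivAt (fun x : ℝ => (2 * (n : ℝ) + 2 - 2 * k) * Real.arcsin x)
        ((2 * (n : ℝ) + 2 - 2 * k) * (1 / Real.sqrt (1 - x^2))) x := hda.const_mul _
    have comp := (Si_hasDerivAt hz).comp x inner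
    exact (comp.const_mul _).mul_const _
  have H := (HasDerivAt.sum heach).const_mul (1 / (2:ℝ) ^ (2 * n + 1))
  convert H using 1
  case e'_4 => rfl
  case e'_5 => rfl
  case e'_8 => ext y; simp [Finset.sum_apply]
  rw [eq_comm]
  have hterm : ∀ k ∈ Finset.range (n+1),
      ((2 * n + 1).choose k : ℝ) * ((2 * (n : ℝ) - 2 * k + 2) / (2 * (n : ℝ) - k + 2)) *
          (Real.sin ((2 * (n : ℝ) + 2 - 2 * k) * θ) / ((2 * (n : ℝ) + 2 - 2 * k) * θ) *
            ((2 * (n : ℝ) + 2 - 2 * k) * (1 / Real.sqrt (1 - x^2)))) * (-1) ^ (k + n)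
      = (((2*n+1).choose k : ℝ) * ((2*(n:ℝ) - 2*(k:ℝ) + 2)/(2*(n:ℝ) - (k:ℝ) + 2)) * (-1)^(k+n)) *
          Real.sin (((2*(n-k)+2 : ℕ):ℝ) * θ) * (1 / (θ * Real.sqrt (1-x^2))) := by
    intro k hk
    have hkn : k ≤ n := by have := Finset.mem_range.1 hk; omega
    have hck := hc k hkn
    have hcast : ((2*(n-k)+2 : ℕ):ℝ) = 2*(n:ℝ) + 2 - 2*k := by
      push_cast [Nat.cast_sub hkn]
      ring
    rw [hcast]
    have hd1 : (2*(n:ℝ) - k + 2) ≠ 0 := by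
      have : (k:ℝ) ≤ n := by exact_mod_cast hkn
      exact ne_of_gt (by linarith)
    have hnk : (1 + (n:ℝ) - k) ≠ 0 := ne_of_gt (by linarith)
    field_simp [hd1, hθ.ne', hsqrt.ne', hck.ne', hnk]
    rw [show (2*((n:ℝ)+1-k)) = 2*(n:ℝ)+2-2*k by ring]
    linear_combination (((2*n+1).choose k : ℝ) * Real.sin ((2*(n:ℝ)+2-2*k)*θ) * (1 + (n:ℝ) - k)) * mul_inv_cancel₀ hnk
  rw [Finset.sum_congr rfl hterm, ← Finset.sum_mul, aux_key n θ, hsin, hcos]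
  field_simp
end

section
/- Let Ci denote the cosine integral, defined for y > 0 by Ci(y) = γ + ln(y) + ∫₀^y (cos t − 1)/t dt, where γ is the Euler–Mascheroni constant, and let arcsin denote the real inverse sine function. For every natural number n, the function F(x) = (1/2^{2n}) · Σ_{k=0}^n C(2n, k) · ((2n-2k+1)/(2n-k+1)) · Ci((2n+1-2k) · arcsin(x)) · (-1)^{k+n} satisfies F'(x) = x^{2n} / arcsin(x) for all x in the open interval (0, 1), where C(n,k) denotes the binomial coefficient. -/
open Real Finset

/-- The cosine integral, `Ci(y) = γ + log y + ∫₀^y (cos t − 1)/t dt` (for `y > 0`). -/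
noncomputable def Ci (y : ℝ) : ℝ :=
  Real.eulerMascheroniConstant + Real.log y + ∫ t in (0:ℝ)..y, (Real.cos t - 1) / t

lemma abs_cos_sub_one_le (t : ℝ) : |Real.cos t - 1| ≤ t^2 / 2 := by
  have h : Real.sin (t/2) ^ 2 = 1/2 - Real.cos (2 * (t/2)) / 2 := Real.sin_sq_eq_half_sub _
  have h2 : Real.cos t - 1 = -(2 * Real.sin (t/2)^2) := by
    rw [show (2 : ℝ) * (t/2) = t by ring] at h; linarith
  rw [h2, abs_neg, abs_of_nonneg (by positivity)]
  have := Real.abs_sin_le_abs (x := t/2)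
  have h3 : Real.sin (t/2)^2 ≤ (t/2)^2 := by
    rw [← sq_abs, ← sq_abs (t/2)]; exact pow_le_pow_left₀ (abs_nonneg _) this 2
  nlinarith

lemma cont_integrand : Continuous fun t : ℝ => (Real.cos t - 1) / t := by
  rw [continuous_iff_continuousAt]
  intro x
  rcases eq_or_ne x 0 with rfl | hx
  · show Filter.Tendsto _ (nhds 0) _
    have h0 : ((fun t : ℝ => (Real.cos t - 1) / t) 0) = 0 := by simp
    rw [h0]
    apply squeeze_zero_norm (a := fun t => |t|/2)
    · intro t
      rcases eq_or_ne t 0 with rfl | ht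
      · simp
      · rw [Real.norm_eq_abs, abs_div]
        rw [div_le_div_iff₀ (abs_pos.2 ht) two_pos]
        have h4 : |t| * |t| = t^2 := by rw [abs_mul_abs_self]; ring
        have := abs_cos_sub_one_le t
        nlinarith [abs_nonneg t, abs_nonneg (Real.cos t - 1)]
    · have : Filter.Tendsto (fun t : ℝ => |t|/2) (nhds 0) (nhds (|(0:ℝ)|/2)) :=
        (continuous_abs.div_const 2).tendsto 0
      simpa using this
  · exact ContinuousAt.div (by fun_prop) continuousAt_id hx

lemma hasDerivAt_Ci {y : ℝ} (hy : 0 < y) :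
    HasDerivAt Ci (Real.cos y / y) y := by
  have h1 : HasDerivAt (fun u : ℝ => ∫ t in (0:ℝ)..u, (Real.cos t - 1) / t)
      ((Real.cos y - 1) / y) y :=
    intervalIntegral.integral_hasDerivAt_right
      (cont_integrand.intervalIntegrable 0 y)
      (cont_integrand.stronglyMeasurableAtFilter _ _)
      cont_integrand.continuousAt
  have h2 : HasDerivAt (fun u : ℝ => Real.eulerMascheroniConstant + Real.log u) y⁻¹ y :=
    (hasDerivAt_log hy.ne').const_add _
  have := h2.add h1
  exact this.congr_deriv (by ring)

lemma neg_one_pow_eq_c (a b : ℕ) (h : a % 2 = b % 2) : (-1:ℂ)^a = (-1:ℂ)^b := by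
  have h2 : ((-1:ℂ)^2) = 1 := by norm_num
  rw [← Nat.div_add_mod a 2, ← Nat.div_add_mod b 2, pow_add, pow_add, pow_mul, pow_mul,
    h2, one_pow, one_pow, h]

lemma exp_sub_exp (z : ℂ) :
    Complex.exp (z*Complex.I) - Complex.exp (-(z*Complex.I)) = 2*Complex.I*Complex.sin z := by
  rw [show -(z*Complex.I) = (-z)*Complex.I by ring, Complex.exp_mul_I, Complex.exp_mul_I,
    Complex.cos_neg, Complex.sin_neg]
  ring

lemma sin_pow_odd_complex (n : ℕ) (θ : ℂ) :
    ∑ k ∈ range (n+1), (-1:ℂ)^(k+n) * ((2*n+1).choose k : ℂ) *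
      Complex.sin ((2*(n:ℂ)+1-2*k)*θ) = 4^n * Complex.sin θ ^ (2*n+1) := by
  set f : ℕ → ℂ := fun j => (-1:ℂ)^(j+1) * ((2*n+1).choose j : ℂ) *
      Complex.exp (-((2*(n:ℂ)+1-2*j)*θ*Complex.I)) with hf
  have key : (Complex.exp (θ*Complex.I) - Complex.exp (-(θ*Complex.I)))^(2*n+1) =
      ∑ j ∈ range (2*n+2), f j := by
    rw [sub_eq_add_neg, add_pow]
    rw [show 2*n+2 = (2*n+1)+1 from rfl]
    apply Finset.sum_congr rfl
    intro j hj
    rw [Finset.mem_range] at hj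
    have hj' : j ≤ 2*n+1 := by omega
    have harg : (↑j : ℂ) * (θ*Complex.I) + ↑(2*n+1-j) * -(θ*Complex.I)
        = -((2*(n:ℂ)+1-2*j)*θ*Complex.I) := by
      push_cast [Nat.cast_sub hj']
      ring
    have hsign : (-1:ℂ)^(2*n+1-j) = (-1:ℂ)^(j+1) := neg_one_pow_eq_c _ _ (by omega)
    rw [neg_pow, ← Complex.exp_nat_mul, ← Complex.exp_nat_mul, hsign, hf]
    simp only
    rw [← harg, Complex.exp_add]
    ring
  have split : ∑ j ∈ range (2*n+2), f j
      = ∑ j ∈ range (n+1), (f j + f (2*n+1-j)) := by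
    rw [show 2*n+2 = (n+1)+(n+1) from by omega, Finset.sum_range_add, Finset.sum_add_distrib]
    congr 1
    rw [← Finset.sum_range_reflect (fun j => f (n+1+j)) (n+1)]
    apply Finset.sum_congr rfl
    intro j hj
    rw [Finset.mem_range] at hj
    congr 1
    omega
  have pair : ∀ j ∈ range (n+1), f j + f (2*n+1-j)
      = (-1:ℂ)^j * ((2*n+1).choose j : ℂ) * (2*Complex.I*Complex.sin ((2*(n:ℂ)+1-2*j)*θ)) := by
    intro j hj
    rw [Finset.mem_range] at hj
    have hj' : j ≤ 2*n+1 := by omega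
    rw [hf]
    simp only
    have hc : ((2*n+1).choose (2*n+1-j) : ℂ) = ((2*n+1).choose j : ℂ) := by
      rw [Nat.choose_symm hj']
    have harg : (2*(n:ℂ)+1-2*(↑(2*n+1-j))) = -(2*(n:ℂ)+1-2*j) := by
      push_cast [Nat.cast_sub hj']; ring
    have hsign : (-1:ℂ)^(2*n+1-j+1) = (-1:ℂ)^j := neg_one_pow_eq_c _ _ (by omega)
    rw [hc, harg, hsign]
    rw [← exp_sub_exp ((2*(n:ℂ)+1-2*j)*θ)]
    have : -(-(2*(n:ℂ)+1-2*↑j) * θ * Complex.I) = (2*(n:ℂ)+1-2*↑j) * θ * Complex.I := by ring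
    rw [this]
    ring
  rw [Finset.sum_congr rfl pair] at split
  rw [split, exp_sub_exp] at key
  have hIn : (2*Complex.I*Complex.sin θ)^(2*n+1)
      = 2*Complex.I * ((-4:ℂ)^n * Complex.sin θ^(2*n+1)) := by
    rw [mul_pow, mul_pow]
    have h1 : (Complex.I)^(2*n+1) = Complex.I * (-1:ℂ)^n := by
      rw [pow_succ, pow_mul, Complex.I_sq, mul_comm]
    have h4 : ((-4:ℂ))^n = (-1)^n * 2^(n*2) := by
      rw [show ((-4:ℂ)) = (-1) * 2^2 by norm_num, mul_pow, ← pow_mul, mul_comm 2 n]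
    rw [h1, h4]
    ring
  rw [hIn] at key
  have hcancel : (-4:ℂ)^n * Complex.sin θ^(2*n+1)
      = ∑ j ∈ range (n+1), (-1:ℂ)^j * ((2*n+1).choose j : ℂ) * Complex.sin ((2*(n:ℂ)+1-2*j)*θ) := by
    have h2I : (2*Complex.I : ℂ) ≠ 0 := by simp [Complex.I_ne_zero]
    apply mul_left_cancel₀ h2I
    rw [key, Finset.mul_sum]
    apply Finset.sum_congr rfl
    intro j _
    ring
  calc ∑ k ∈ range (n+1), (-1:ℂ)^(k+n) * ((2*n+1).choose k : ℂ) * Complex.sin ((2*(n:ℂ)+1-2*k)*θ)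
      = (-1:ℂ)^n * ∑ k ∈ range (n+1), (-1:ℂ)^k * ((2*n+1).choose k : ℂ) * Complex.sin ((2*(n:ℂ)+1-2*k)*θ) := by
        rw [Finset.mul_sum]; apply Finset.sum_congr rfl; intro k _; rw [pow_add]; ring
    _ = (-1:ℂ)^n * ((-4:ℂ)^n * Complex.sin θ^(2*n+1)) := by rw [hcancel]
    _ = 4^n * Complex.sin θ ^ (2*n+1) := by
        rw [← mul_assoc, ← mul_pow]; norm_num

lemma sin_pow_odd_real (n : ℕ) (θ : ℝ) :
    ∑ k ∈ range (n+1), (-1:ℝ)^(k+n) * ((2*n+1).choose k : ℝ) *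
      Real.sin ((2*(n:ℝ)+1-2*k)*θ) = 4^n * Real.sin θ ^ (2*n+1) := by
  have h := sin_pow_odd_complex n (θ : ℂ)
  apply Complex.ofReal_injective
  push_cast
  exact_mod_cast h

lemma hasDerivAt_sin_const_mul (c θ : ℝ) :
    HasDerivAt (fun t : ℝ => Real.sin (c*t)) (Real.cos (c*θ) * c) θ := by
  have := (Real.hasDerivAt_sin (c*θ)).comp θ ((hasDerivAt_id θ).const_mul c)
  simp only [Function.comp_def, mul_one] at this
  convert this using 1

lemma cos_pow_identity (n : ℕ) (θ : ℝ) :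
    ∑ k ∈ range (n+1), (-1:ℝ)^(k+n) * ((2*n+1).choose k : ℝ) * (2*(n:ℝ)+1-2*k) *
      Real.cos ((2*(n:ℝ)+1-2*k)*θ)
    = 4^n * (2*(n:ℝ)+1) * Real.sin θ ^ (2*n) * Real.cos θ := by
  have hfun : (fun t : ℝ => ∑ k ∈ range (n+1), (-1:ℝ)^(k+n) * ((2*n+1).choose k : ℝ) *
      Real.sin ((2*(n:ℝ)+1-2*k)*t)) = fun t : ℝ => 4^n * Real.sin t ^ (2*n+1) :=
    funext (sin_pow_odd_real n)
  have hF : HasDerivAt (fun t : ℝ => ∑ k ∈ range (n+1), (-1:ℝ)^(k+n) * ((2*n+1).choose k : ℝ) *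
      Real.sin ((2*(n:ℝ)+1-2*k)*t))
      (∑ k ∈ range (n+1), (-1:ℝ)^(k+n) * ((2*n+1).choose k : ℝ) * (2*(n:ℝ)+1-2*k) *
        Real.cos ((2*(n:ℝ)+1-2*k)*θ)) θ := by
    apply HasDerivAt.fun_sum
    intro k _
    have := (hasDerivAt_sin_const_mul (2*(n:ℝ)+1-2*k) θ).const_mul
      ((-1:ℝ)^(k+n) * ((2*n+1).choose k : ℝ))
    exact this.congr_deriv (by ring)
  have hG : HasDerivAt (fun t : ℝ => 4^n * Real.sin t ^ (2*n+1))
      (4^n * (2*(n:ℝ)+1) * Real.sin θ ^ (2*n) * Real.cos θ) θ := by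
    have := ((Real.hasDerivAt_sin θ).pow (2*n+1)).const_mul ((4:ℝ)^n)
    exact this.congr_deriv (by push_cast; ring)
  rw [hfun] at hF
  exact hF.unique hG

lemma coef_eq (n k : ℕ) (hk : k ≤ n) :
    ((2*n).choose k : ℝ) * ((2*(n:ℝ)-2*k+1)/(2*(n:ℝ)-k+1))
      = ((2*n+1).choose k : ℝ) * (2*(n:ℝ)+1-2*k) / (2*(n:ℝ)+1) := by
  have hk2 : k ≤ 2*n := by omega
  have hnat : (2*n+1) * (2*n).choose k = (2*n+1).choose k * (2*n+1-k) := by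
    have h := Nat.add_one_mul_choose_eq (2*n) (2*n-k)
    rw [Nat.choose_symm hk2] at h
    rw [show (2*n+1).choose (2*n-k+1) = (2*n+1).choose k from by
      rw [show 2*n-k+1 = 2*n+1-k from by omega, Nat.choose_symm (by omega)]] at h
    rw [h]
    congr 1
    omega
  have hcast : (2*(n:ℝ)+1) * ((2*n).choose k : ℝ)
      = ((2*n+1).choose k : ℝ) * (2*(n:ℝ)+1-(k:ℝ)) := by
    have := congrArg (Nat.cast (R := ℝ)) hnat
    push_cast [Nat.cast_sub (show k ≤ 2*n+1 by omega)] at this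
    linarith [this]
  have hd1 : 2*(n:ℝ)-k+1 ≠ 0 := by
    have : (k:ℝ) ≤ n := by exact_mod_cast hk
    have hn : (0:ℝ) ≤ n := Nat.cast_nonneg n
    nlinarith
  have hd2 : 2*(n:ℝ)+1 ≠ 0 := by positivity
  field_simp
  nlinarith [hcast]

theorem hasDerivAt_antiderivative_pow_even_div_arcsin (n : ℕ) :
    ∀ x ∈ Set.Ioo (0 : ℝ) 1,
      HasDerivAt (fun x : ℝ =>
          (1 / 2 ^ (2 * n)) * ∑ k ∈ Finset.range (n + 1),
            ((2 * n).choose k : ℝ) * ((2 * (n : ℝ) - 2 * k + 1) / (2 * (n : ℝ) - k + 1)) *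
              Ci ((2 * (n : ℝ) + 1 - 2 * k) * Real.arcsin x) * (-1) ^ (k + n))
        (x ^ (2 * n) / Real.arcsin x) x := by
  rintro x ⟨hx0, hx1⟩
  set θ := Real.arcsin x with hθdef
  have hθ : 0 < θ := Real.arcsin_pos.2 hx0
  have hs : 0 < Real.sqrt (1 - x^2) := by
    apply Real.sqrt_pos.2; nlinarith
  have harc : HasDerivAt Real.arcsin (1 / Real.sqrt (1 - x^2)) x :=
    Real.hasDerivAt_arcsin (by linarith) hx1.ne
  have hterm : ∀ k ∈ range (n+1),
      HasDerivAt (fun y : ℝ =>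
        ((2 * n).choose k : ℝ) * ((2 * (n : ℝ) - 2 * k + 1) / (2 * (n : ℝ) - k + 1)) *
          Ci ((2 * (n : ℝ) + 1 - 2 * k) * Real.arcsin y) * (-1) ^ (k + n))
        ((((2 * n).choose k : ℝ) * ((2 * (n : ℝ) - 2 * k + 1) / (2 * (n : ℝ) - k + 1))) *
          (Real.cos ((2 * (n : ℝ) + 1 - 2 * k) * θ) / ((2 * (n : ℝ) + 1 - 2 * k) * θ) *
            ((2 * (n : ℝ) + 1 - 2 * k) * (1 / Real.sqrt (1 - x^2)))) * (-1) ^ (k + n)) x := by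
    intro k hk
    rw [Finset.mem_range] at hk
    have hkn : k ≤ n := by omega
    have hc : (0:ℝ) < 2 * (n : ℝ) + 1 - 2 * k := by
      have : (k:ℝ) ≤ n := by exact_mod_cast hkn
      linarith
    have hcθ : 0 < (2 * (n : ℝ) + 1 - 2 * k) * θ := mul_pos hc hθ
    have hinner : HasDerivAt (fun y : ℝ => (2 * (n : ℝ) + 1 - 2 * k) * Real.arcsin y)
        ((2 * (n : ℝ) + 1 - 2 * k) * (1 / Real.sqrt (1 - x^2))) x := harc.const_mul _
    have hcomp : HasDerivAt (fun y : ℝ => Ci ((2 * (n : ℝ) + 1 - 2 * k) * Real.arcsin y))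
        (Real.cos ((2 * (n : ℝ) + 1 - 2 * k) * θ) / ((2 * (n : ℝ) + 1 - 2 * k) * θ) *
          ((2 * (n : ℝ) + 1 - 2 * k) * (1 / Real.sqrt (1 - x^2)))) x :=
      HasDerivAt.comp (h₂ := Ci) x (hasDerivAt_Ci hcθ) hinner
    exact (hcomp.const_mul _).mul_const _
  have hsum := (HasDerivAt.fun_sum hterm).const_mul (1 / (2:ℝ) ^ (2*n))
  refine hsum.congr_deriv (Eq.symm ?_)
  have hsimp : ∀ k ∈ range (n+1),
      ((((2 * n).choose k : ℝ) * ((2 * (n : ℝ) - 2 * k + 1) / (2 * (n : ℝ) - k + 1))) *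
        (Real.cos ((2 * (n : ℝ) + 1 - 2 * k) * θ) / ((2 * (n : ℝ) + 1 - 2 * k) * θ) *
          ((2 * (n : ℝ) + 1 - 2 * k) * (1 / Real.sqrt (1 - x^2)))) * (-1) ^ (k + n))
      = ((-1:ℝ)^(k+n) * ((2*n+1).choose k : ℝ) * (2*(n:ℝ)+1-2*k) *
          Real.cos ((2*(n:ℝ)+1-2*k)*θ)) *
        (1 / ((2*(n:ℝ)+1) * θ * Real.sqrt (1 - x^2))) := by
    intro k hk
    rw [Finset.mem_range] at hk
    have hkn : k ≤ n := by omega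
    have hc : (0:ℝ) < 2 * (n : ℝ) + 1 - 2 * k := by
      have : (k:ℝ) ≤ n := by exact_mod_cast hkn
      linarith
    rw [coef_eq n k hkn]
    have h2n1 : (0:ℝ) < 2*(n:ℝ)+1 := by positivity
    field_simp
  rw [Finset.sum_congr rfl hsimp, ← Finset.sum_mul, cos_pow_identity n θ]
  have hsin : Real.sin θ = x := Real.sin_arcsin (by linarith) (by linarith)
  have hcos : Real.cos θ = Real.sqrt (1 - x^2) := Real.cos_arcsin x
  rw [hsin, hcos]
  have h24 : (2:ℝ)^(2*n) = 4^n := by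
    rw [pow_mul]; norm_num
  rw [h24]
  have h2n1 : (0:ℝ) < 2*(n:ℝ)+1 := by positivity
  field_simp
end

section
/- Let Si denote the sine integral, Si(z) = ∫₀^z (sin t)/t dt, and let arcsin denote the real inverse sine function. For every natural number k, the function F(x) = (1/2^{2k}) · ( −2^{2k} · √(1−x²) · x^{2k} / arcsin(x) + (−1)^{k+1} · (2k+1) · Si((2k+1) · arcsin(x)) + Σ_{n=1}^{k} (−1)^n · ((1−2n)²/(k+1−n)) · C(2k, k+n) · Si((2n−1) · arcsin(x)) ) satisfies F'(x) = x^{2k} / (arcsin(x))² for all x in the open interval (0, 1), where C(n,k) denotes the binomial coefficient. -/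
open Real

open Finset
lemma sinc_intervalIntegrable (a b : ℝ) :
    IntervalIntegrable (fun t : ℝ => Real.sin t / t) MeasureTheory.volume a b := by
  rw [intervalIntegrable_iff]
  apply MeasureTheory.Measure.integrableOn_of_bounded
  · exact (measure_Ioc_lt_top).ne
  · exact (Real.measurable_sin.div measurable_id).aestronglyMeasurable
  · refine MeasureTheory.ae_of_all _ fun t => ?_
    show ‖Real.sin t / t‖ ≤ 1
    rw [Real.norm_eq_abs, abs_div]
    rcases eq_or_ne t 0 with h | h
    · simp [h]
    · exact div_le_one_of_le₀ Real.abs_sin_le_abs (abs_nonneg t)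

lemma hasDerivAt_Si {y : ℝ} (hy : y ≠ 0) : HasDerivAt Si (Real.sin y / y) y := by
  apply intervalIntegral.integral_hasDerivAt_right (sinc_intervalIntegrable 0 y)
  · exact ((Real.measurable_sin.div measurable_id).stronglyMeasurable).stronglyMeasurableAtFilter
  · exact (Real.continuous_sin.continuousAt).div continuousAt_id hy

lemma lemma1 (k : ℕ) (θ : ℝ) :
    (4:ℝ)^k * Real.sin θ ^ (2*k) =
      (-1:ℝ)^k * ∑ j ∈ Finset.range (2*k+1),
        (-1:ℝ)^j * ((2*k).choose j) * Real.cos ((2*(j:ℝ) - 2*k) * θ) := by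
  have hdiff : Complex.exp (θ*Complex.I) + (- Complex.exp (-(θ*Complex.I))) =
      2 * Complex.I * (Real.sin θ : ℂ) := by
    rw [show -((θ:ℂ)*Complex.I) = ((-θ:ℝ):ℂ)*Complex.I by push_cast; ring,
      Complex.exp_mul_I, Complex.exp_mul_I]
    push_cast [← Complex.ofReal_sin, ← Complex.ofReal_cos]
    rw [Complex.cos_neg, Complex.sin_neg]
    push_cast
    ring
  have h1 : (2 * Complex.I * (Real.sin θ : ℂ))^(2*k) =
      ∑ j ∈ Finset.range (2*k+1),
        (((-1:ℝ)^j * ((2*k).choose j) : ℝ) : ℂ) * Complex.exp (((2*(j:ℝ) - 2*k) * θ : ℝ) * Complex.I) := by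
    rw [← hdiff, add_pow]
    refine Finset.sum_congr rfl fun j hj => ?_
    have hjle : j ≤ 2*k := Nat.lt_succ_iff.mp (Finset.mem_range.mp hj)
    have hA : (-1:ℂ)^(2*k - j) * (-1:ℂ)^j = 1 := by
      rw [← pow_add, show 2*k-j+j = 2*k from by omega, pow_mul, neg_one_sq, one_pow]
    have hB : (-1:ℂ)^j * (-1:ℂ)^j = 1 := by
      rw [← pow_add, ← two_mul, pow_mul, neg_one_sq, one_pow]
    have hsign : (-1:ℂ)^(2*k - j) = (-1:ℂ)^j := by
      linear_combination ((-1:ℂ)^j) * hA - ((-1:ℂ)^(2*k-j)) * hB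
    have harg : (j:ℂ) * ((θ:ℂ)*Complex.I) + (2*k - j : ℕ) * (-((θ:ℂ)*Complex.I)) =
        (((2*(j:ℝ) - 2*k) * θ : ℝ) : ℂ) * Complex.I := by
      push_cast [Nat.cast_sub hjle]
      ring
    have hkey : Complex.exp ((j:ℂ)*((θ:ℂ)*Complex.I)) * Complex.exp (((2*k-j:ℕ):ℂ)*(-((θ:ℂ)*Complex.I)))
        = Complex.exp ((((2*(j:ℝ) - 2*k) * θ : ℝ) : ℂ) * Complex.I) := by
      rw [← Complex.exp_add, harg]
    rw [neg_pow, hsign, ← Complex.exp_nat_mul, ← Complex.exp_nat_mul]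
    push_cast at hkey ⊢
    linear_combination ((-1:ℂ)^j * ((2*k).choose j : ℂ)) * hkey
  have h2 := congrArg Complex.re h1
  have hL : (2 * Complex.I * (Real.sin θ : ℂ))^(2*k) =
      ((((-1:ℝ)^k * 4^k * Real.sin θ^(2*k)) : ℝ) : ℂ) := by
    rw [mul_pow, mul_pow, show Complex.I ^ (2*k) = ((-1:ℂ))^k by
      rw [pow_mul, Complex.I_sq]]
    push_cast
    rw [show (4:ℂ) = 2^2 by norm_num, ← pow_mul]
    ring
  rw [hL] at h2
  rw [Complex.ofReal_re] at h2
  have hR : (∑ j ∈ Finset.range (2*k+1),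
      (((-1:ℝ)^j * ((2*k).choose j) : ℝ) : ℂ) * Complex.exp (((2*(j:ℝ) - 2*k) * θ : ℝ) * Complex.I)).re
      = ∑ j ∈ Finset.range (2*k+1), (-1:ℝ)^j * ((2*k).choose j) * Real.cos ((2*(j:ℝ) - 2*k) * θ) := by
    rw [Complex.re_sum]
    refine Finset.sum_congr rfl fun j _ => ?_
    rw [Complex.re_ofReal_mul, Complex.exp_ofReal_mul_I_re]
  rw [hR] at h2
  have : ((-1:ℝ)^k) * ((-1:ℝ)^k * 4^k * Real.sin θ^(2*k)) = (-1:ℝ)^k * (∑ j ∈ Finset.range (2*k+1), (-1:ℝ)^j * ((2*k).choose j) * Real.cos ((2*(j:ℝ) - 2*k) * θ)) := by rw [← h2]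
  calc (4:ℝ)^k * Real.sin θ ^ (2*k) = ((-1:ℝ)^k) * ((-1:ℝ)^k * 4^k * Real.sin θ^(2*k)) := by
        rw [← mul_assoc, ← mul_assoc, ← mul_pow]; norm_num
    _ = _ := this

lemma lemma1' (k : ℕ) (θ : ℝ) :
    (4:ℝ)^k * Real.sin θ ^ (2*k) =
      ((2*k).choose k : ℝ) +
        ∑ n ∈ Finset.Icc 1 k, 2 * ((-1:ℝ)^n * ((2*k).choose (k+n) : ℝ) * Real.cos (2*(n:ℝ)*θ)) := by
  have hsym : ∀ n, n ≤ k →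
      (-1:ℝ)^(k-n) * ((2*k).choose (k-n) : ℝ) * Real.cos ((2*((k-n:ℕ):ℝ) - 2*k) * θ)
      = (-1:ℝ)^(k+n) * ((2*k).choose (k+n) : ℝ) * Real.cos ((2*((k+n:ℕ):ℝ) - 2*k) * θ) := by
    intro n hn
    have hc : (2*k).choose (k-n) = (2*k).choose (k+n) := by
      rw [show k - n = 2*k - (k+n) from by omega]
      exact Nat.choose_symm (by omega)
    have hs : (-1:ℝ)^(k+n) = (-1:ℝ)^(k-n) := by
      rw [show k+n = (k-n)+2*n from by omega, pow_add, pow_mul, neg_one_sq, one_pow, mul_one]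
    have hcos : Real.cos ((2*((k-n:ℕ):ℝ) - 2*k) * θ) = Real.cos ((2*((k+n:ℕ):ℝ) - 2*k) * θ) := by
      push_cast [Nat.cast_sub hn]
      rw [show (2*((k:ℝ)-n) - 2*k) * θ = -((2*((k:ℝ)+n) - 2*k) * θ) from by ring, Real.cos_neg]
    rw [hc, hs, hcos]
  have hIcc : ∀ g : ℕ → ℝ, ∑ n ∈ Finset.Icc 1 k, g n = ∑ j ∈ Finset.range k, g (1+j) := by
    intro g
    rw [← Finset.Ico_add_one_right_eq_Icc, Finset.sum_Ico_eq_sum_range]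
    simp
  set f : ℕ → ℝ := fun j => (-1:ℝ)^j * ((2*k).choose j : ℝ) * Real.cos ((2*(j:ℝ) - 2*k) * θ) with hf
  have h1 : ∑ j ∈ Finset.range k, f j = ∑ j ∈ Finset.range k, f (k+1+j) := by
    rw [← Finset.sum_range_reflect]
    refine Finset.sum_congr rfl fun j hj => ?_
    have hjk : j < k := Finset.mem_range.mp hj
    have := hsym (j+1) (by omega)
    rw [show k - (j+1) = k-1-j from by omega] at this
    rw [show k+1+j = k+(j+1) from by ring]
    exact this
  have h2 : ∑ x ∈ Finset.range k, f (k+(x+1)) = ∑ x ∈ Finset.range k, f (k+1+x) :=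
    Finset.sum_congr rfl fun x _ => by rw [show k+(x+1) = k+1+x from by omega]
  have hsplit : ∑ j ∈ Finset.range (2*k+1), f j = f k + 2 * ∑ j ∈ Finset.range k, f (k+1+j) := by
    rw [show 2*k+1 = k + (k+1) from by ring, Finset.sum_range_add, Finset.sum_range_succ', h2]
    simp only [Nat.add_zero]
    rw [h1]
    ring
  have hmap : ∑ n ∈ Finset.Icc 1 k, 2 * ((-1:ℝ)^n * ((2*k).choose (k+n) : ℝ) * Real.cos (2*(n:ℝ)*θ))
      = (-1:ℝ)^k * (2 * ∑ j ∈ Finset.range k, f (k+1+j)) := by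
    rw [hIcc]
    rw [Finset.mul_sum, Finset.mul_sum]
    refine Finset.sum_congr rfl fun j hj => ?_
    rw [hf]
    simp only
    rw [show k+1+j = k+(1+j) from by ring]
    have hcos : Real.cos ((2*((k+(1+j):ℕ):ℝ) - 2*k) * θ) = Real.cos (2*((1+j:ℕ):ℝ)*θ) := by
      push_cast
      ring_nf
    rw [hcos, pow_add ((-1:ℝ)) k (1+j)]
    have hkk : (-1:ℝ)^k * (-1:ℝ)^k = 1 := by
      rw [← pow_add, ← two_mul, pow_mul, neg_one_sq, one_pow]
    push_cast
    ring_nf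
    rw [pow_mul ((-1:ℝ)) k 2, show ((-1:ℝ)^k)^2 = 1 from by rw [← pow_mul, mul_comm, pow_mul, neg_one_sq, one_pow]]
    ring
  have hfk : (-1:ℝ)^k * f k = ((2*k).choose k : ℝ) := by
    rw [hf]
    simp only
    rw [show (2*(k:ℝ) - 2*k) * θ = 0 from by ring, Real.cos_zero, ← mul_assoc, ← mul_assoc, ← pow_add, ← two_mul, pow_mul, neg_one_sq, one_pow]
    ring
  rw [lemma1 k θ, hsplit, mul_add, hfk, hmap]

lemma hIcc' (a b : ℕ) (g : ℕ → ℝ) :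
    ∑ n ∈ Finset.Icc a b, g n = ∑ j ∈ Finset.range (b+1-a), g (a+j) := by
  rw [← Finset.Ico_add_one_right_eq_Icc, Finset.sum_Ico_eq_sum_range]

lemma binom_step {k n : ℕ} (h1 : 1 ≤ n) (h2 : n ≤ k) :
    ((2*k).choose (k+n-1) : ℝ) - ((2*k).choose (k+n) : ℝ)
      = (2*(n:ℝ)-1)/((k:ℝ)+1-n) * ((2*k).choose (k+n) : ℝ) := by
  have hd : ((k:ℝ)+1-n) > 0 := by
    have : (n:ℝ) ≤ k := by exact_mod_cast h2
    linarith
  have hnat := Nat.choose_succ_right_eq (2*k) (k+n-1)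
  rw [show k+n-1+1 = k+n from by omega, show 2*k - (k+n-1) = k-n+1 from by omega] at hnat
  have hcast : ((2*k).choose (k+n) : ℝ) * ((k:ℝ)+n) = ((2*k).choose (k+n-1) : ℝ) * ((k:ℝ)-n+1) := by
    have := congrArg (fun m : ℕ => (m:ℝ)) hnat
    push_cast [Nat.cast_sub h2] at this
    convert this using 2 <;> push_cast [Nat.cast_sub h2] <;> ring
  field_simp
  nlinarith [hcast]

lemma dagger (k : ℕ) (θ : ℝ) :
    -(((2*k).choose k : ℝ)) * Real.sin θ +
        ∑ n ∈ Finset.Icc 1 k, (-1:ℝ)^n * ((2*k).choose (k+n) : ℝ) *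
          (-((2*(n:ℝ)+1) * Real.sin ((2*(n:ℝ)+1)*θ)) - (2*(n:ℝ)-1) * Real.sin ((2*(n:ℝ)-1)*θ))
      = (-1:ℝ)^(k+1) * (2*(k:ℝ)+1) * Real.sin ((2*(k:ℝ)+1)*θ) +
        ∑ n ∈ Finset.Icc 1 k, (-1:ℝ)^n * ((1-2*(n:ℝ))^2/((k:ℝ)+1-n)) * ((2*k).choose (k+n) : ℝ) *
          Real.sin ((2*(n:ℝ)-1)*θ) := by
  set H : ℕ → ℝ := fun m => (-1:ℝ)^m * (2*(m:ℝ)-1) * ((2*k).choose (k+m-1) : ℝ) * Real.sin ((2*(m:ℝ)-1)*θ) with hH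
  set A : ℕ → ℝ := fun n => (-1:ℝ)^n * ((2*k).choose (k+n) : ℝ) * (-((2*(n:ℝ)+1) * Real.sin ((2*(n:ℝ)+1)*θ))) with hA
  set B : ℕ → ℝ := fun n => (-1:ℝ)^n * ((2*k).choose (k+n) : ℝ) * (-((2*(n:ℝ)-1) * Real.sin ((2*(n:ℝ)-1)*θ))) with hB
  have hsplit : ∑ n ∈ Finset.Icc 1 k, (-1:ℝ)^n * ((2*k).choose (k+n) : ℝ) *
      (-((2*(n:ℝ)+1) * Real.sin ((2*(n:ℝ)+1)*θ)) - (2*(n:ℝ)-1) * Real.sin ((2*(n:ℝ)-1)*θ))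
      = ∑ n ∈ Finset.Icc 1 k, (A n + B n) := by
    refine Finset.sum_congr rfl fun n _ => ?_
    rw [hA, hB]; ring
  have hAH : ∀ j : ℕ, A (1+j) = H (2+j) := by
    intro j
    rw [hA, hH]
    simp only
    rw [show k+(2+j)-1 = k+(1+j) from by omega, show (2+j) = (1+j)+1 from by omega, pow_succ]
    push_cast
    ring_nf
  have hshift : -(((2*k).choose k : ℝ)) * Real.sin θ + ∑ n ∈ Finset.Icc 1 k, A n
      = ∑ m ∈ Finset.Icc 1 (k+1), H m := by
    rw [hIcc' 1 k A, hIcc' 1 (k+1) H]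
    rw [show k+1+1-1 = k+1 from by omega, show k+1-1 = k from by omega]
    rw [Finset.sum_range_succ']
    have h1 : ∀ j ∈ Finset.range k, A (1+j) = H (1+(j+1)) := by
      intro j _
      rw [show 1+(j+1) = 2+j from by omega]
      exact hAH j
    rw [Finset.sum_congr rfl h1]
    have hH1 : H (1+0) = -(((2*k).choose k : ℝ) * Real.sin θ) := by
      rw [hH]
      simp only
      rw [show k+(1+0)-1 = k from by omega]
      norm_num
    rw [hH1]
    ring
  have htop : ∑ m ∈ Finset.Icc 1 (k+1), H m = ∑ m ∈ Finset.Icc 1 k, H m + H (k+1) := by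
    exact Finset.sum_Icc_succ_top (by omega) H
  have hHtop : H (k+1) = (-1:ℝ)^(k+1) * (2*(k:ℝ)+1) * Real.sin ((2*(k:ℝ)+1)*θ) := by
    rw [hH]
    simp only
    rw [show k+(k+1)-1 = 2*k from by omega, Nat.choose_self]
    push_cast
    ring_nf
  have hfinal : ∀ n ∈ Finset.Icc 1 k, H n + B n
      = (-1:ℝ)^n * ((1-2*(n:ℝ))^2/((k:ℝ)+1-n)) * ((2*k).choose (k+n) : ℝ) * Real.sin ((2*(n:ℝ)-1)*θ) := by
    intro n hn
    obtain ⟨h1, h2⟩ := Finset.mem_Icc.mp hn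
    have hb := binom_step h1 h2
    have hd : ((k:ℝ)+1-n) ≠ 0 := by
      have : (n:ℝ) ≤ k := by exact_mod_cast h2
      intro h; linarith
    simp only [hH, hB]
    linear_combination ((-1:ℝ)^n * (2*(n:ℝ)-1) * Real.sin ((2*(n:ℝ)-1)*θ)) * hb
  calc -(((2*k).choose k : ℝ)) * Real.sin θ +
        ∑ n ∈ Finset.Icc 1 k, (-1:ℝ)^n * ((2*k).choose (k+n) : ℝ) *
          (-((2*(n:ℝ)+1) * Real.sin ((2*(n:ℝ)+1)*θ)) - (2*(n:ℝ)-1) * Real.sin ((2*(n:ℝ)-1)*θ))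
      = (-(((2*k).choose k : ℝ)) * Real.sin θ + ∑ n ∈ Finset.Icc 1 k, A n) + ∑ n ∈ Finset.Icc 1 k, B n := by
        rw [hsplit, Finset.sum_add_distrib]; ring
    _ = (∑ m ∈ Finset.Icc 1 k, H m + H (k+1)) + ∑ n ∈ Finset.Icc 1 k, B n := by rw [hshift, htop]
    _ = H (k+1) + ∑ n ∈ Finset.Icc 1 k, (H n + B n) := by rw [Finset.sum_add_distrib]; ring
    _ = _ := by rw [hHtop, Finset.sum_congr rfl hfinal]

lemma star (k : ℕ) (θ : ℝ) :
    (4:ℝ)^k * (Real.sin θ ^ (2*k) * Real.cos θ) =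
      ((2*k).choose k : ℝ) * Real.cos θ +
        ∑ n ∈ Finset.Icc 1 k, (-1:ℝ)^n * ((2*k).choose (k+n) : ℝ) *
          (Real.cos ((2*(n:ℝ)+1)*θ) + Real.cos ((2*(n:ℝ)-1)*θ)) := by
  have h := lemma1' k θ
  have h2 : (4:ℝ)^k * (Real.sin θ ^ (2*k) * Real.cos θ)
      = (((2*k).choose k : ℝ) +
        ∑ n ∈ Finset.Icc 1 k, 2 * ((-1:ℝ)^n * ((2*k).choose (k+n) : ℝ) * Real.cos (2*(n:ℝ)*θ))) * Real.cos θ := by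
    rw [← h]; ring
  rw [h2, add_mul, Finset.sum_mul]
  congr 1
  refine Finset.sum_congr rfl fun n _ => ?_
  have hpts : Real.cos ((2*(n:ℝ)+1)*θ) + Real.cos ((2*(n:ℝ)-1)*θ) = 2*Real.cos (2*(n:ℝ)*θ)*Real.cos θ := by
    rw [show (2*(n:ℝ)+1)*θ = 2*(n:ℝ)*θ + θ from by ring, show (2*(n:ℝ)-1)*θ = 2*(n:ℝ)*θ - θ from by ring,
      Real.cos_add, Real.cos_sub]
    ring
  rw [hpts]; ring

lemma key (k : ℕ) (θ : ℝ) :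
    (-1:ℝ)^(k+1) * (2*(k:ℝ)+1) * Real.sin ((2*(k:ℝ)+1)*θ) +
        ∑ n ∈ Finset.Icc 1 k, (-1:ℝ)^n * ((1-2*(n:ℝ))^2/((k:ℝ)+1-n)) * ((2*k).choose (k+n) : ℝ) *
          Real.sin ((2*(n:ℝ)-1)*θ)
      = 4^k * ((2*k:ℝ) * Real.sin θ^(2*k-1) * Real.cos θ^2 - Real.sin θ^(2*k+1)) := by
  have hF1 : HasDerivAt (fun t : ℝ => (4:ℝ)^k * (Real.sin t ^ (2*k) * Real.cos t))
      ((4:ℝ)^k * ((((2*k:ℕ):ℝ) * Real.sin θ^(2*k-1) * Real.cos θ) * Real.cos θ + Real.sin θ^(2*k) * (-Real.sin θ))) θ := by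
    exact (((Real.hasDerivAt_sin θ).pow (2*k)).mul (Real.hasDerivAt_cos θ)).const_mul ((4:ℝ)^k)
  have hF2 : HasDerivAt (fun t : ℝ => ((2*k).choose k : ℝ) * Real.cos t +
        ∑ n ∈ Finset.Icc 1 k, (-1:ℝ)^n * ((2*k).choose (k+n) : ℝ) *
          (Real.cos ((2*(n:ℝ)+1)*t) + Real.cos ((2*(n:ℝ)-1)*t)))
      (((2*k).choose k : ℝ) * (-Real.sin θ) +
        ∑ n ∈ Finset.Icc 1 k, (-1:ℝ)^n * ((2*k).choose (k+n) : ℝ) *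
          (-Real.sin ((2*(n:ℝ)+1)*θ) * (2*(n:ℝ)+1) + -Real.sin ((2*(n:ℝ)-1)*θ) * (2*(n:ℝ)-1))) θ := by
    apply HasDerivAt.add
    · exact (Real.hasDerivAt_cos θ).const_mul _
    · apply HasDerivAt.fun_sum
      intro n _
      apply HasDerivAt.const_mul
      apply HasDerivAt.add
      · simpa using HasDerivAt.cos ((hasDerivAt_id θ).const_mul (2*(n:ℝ)+1))
      · simpa using HasDerivAt.cos ((hasDerivAt_id θ).const_mul (2*(n:ℝ)-1))
  have hEq : (fun t : ℝ => (4:ℝ)^k * (Real.sin t ^ (2*k) * Real.cos t))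
      = (fun t : ℝ => ((2*k).choose k : ℝ) * Real.cos t +
        ∑ n ∈ Finset.Icc 1 k, (-1:ℝ)^n * ((2*k).choose (k+n) : ℝ) *
          (Real.cos ((2*(n:ℝ)+1)*t) + Real.cos ((2*(n:ℝ)-1)*t))) := funext fun t => star k t
  rw [hEq] at hF1
  have hder := hF1.unique hF2
  have hsum : ∑ n ∈ Finset.Icc 1 k, (-1:ℝ)^n * ((2*k).choose (k+n) : ℝ) *
          (-((2*(n:ℝ)+1) * Real.sin ((2*(n:ℝ)+1)*θ)) - (2*(n:ℝ)-1) * Real.sin ((2*(n:ℝ)-1)*θ))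
      = ∑ n ∈ Finset.Icc 1 k, (-1:ℝ)^n * ((2*k).choose (k+n) : ℝ) *
          (-Real.sin ((2*(n:ℝ)+1)*θ) * (2*(n:ℝ)+1) + -Real.sin ((2*(n:ℝ)-1)*θ) * (2*(n:ℝ)-1)) := by
    refine Finset.sum_congr rfl fun n _ => by ring
  rw [← dagger k θ, hsum, show -(((2*k).choose k : ℝ)) * Real.sin θ = ((2*k).choose k : ℝ) * (-Real.sin θ) from by ring,
    ← hder]
  push_cast
  ring

theorem hasDerivAt_antiderivative_pow_div_arcsin_sq (k : ℕ) :
    ∀ x ∈ Set.Ioo (0 : ℝ) 1,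
      HasDerivAt (fun x : ℝ =>
          (1 / 2 ^ (2 * k)) *
            (-(2 ^ (2 * k) * Real.sqrt (1 - x ^ 2) * x ^ (2 * k) / Real.arcsin x) +
              (-1) ^ (k + 1) * (2 * (k : ℝ) + 1) * Si ((2 * (k : ℝ) + 1) * Real.arcsin x) +
              ∑ n ∈ Finset.Icc 1 k,
                (-1) ^ n * ((1 - 2 * (n : ℝ)) ^ 2 / ((k : ℝ) + 1 - n)) *
                  ((2 * k).choose (k + n) : ℝ) * Si ((2 * (n : ℝ) - 1) * Real.arcsin x)))
        (x ^ (2 * k) / Real.arcsin x ^ 2) x := by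
  rintro x ⟨hx0, hx1⟩
  set θ := Real.arcsin x with hθ
  have hθ0 : 0 < θ := Real.arcsin_pos.mpr hx0
  have hθne : θ ≠ 0 := ne_of_gt hθ0
  have hsin : Real.sin θ = x := Real.sin_arcsin (by linarith) (le_of_lt hx1)
  have hx2 : 0 < 1 - x^2 := by nlinarith
  set s := Real.sqrt (1 - x^2) with hs
  have hspos : 0 < s := Real.sqrt_pos.mpr hx2
  have hsne : s ≠ 0 := ne_of_gt hspos
  have hs2 : s^2 = 1 - x^2 := Real.sq_sqrt hx2.le
  have hcos : Real.cos θ = s := Real.cos_arcsin x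
  have hp2 : ((2:ℝ))^(2*k) ≠ 0 := by positivity
  have harcsin : HasDerivAt Real.arcsin (1 / s) x :=
    Real.hasDerivAt_arcsin (by linarith : x ≠ -1) (ne_of_lt hx1)
  -- derivative of the first term
  have hinner : HasDerivAt (fun x : ℝ => 1 - x^2) (-(2*x^(2-1))) x := by
    simpa using (hasDerivAt_pow 2 x).const_sub 1
  have hsq : HasDerivAt (fun x : ℝ => Real.sqrt (1 - x^2)) (-(2*x^(2-1)) / (2*s)) x :=
    hinner.sqrt (ne_of_gt hx2)
  have hu : HasDerivAt (fun x : ℝ => 2 ^ (2*k) * Real.sqrt (1 - x ^ 2) * x ^ (2*k))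
      ((2:ℝ)^(2*k) * (2*(k:ℝ) * x^(2*k-1) * (1-x^2) - x^(2*k+1)) / s) x := by
    have h1 := (hsq.const_mul ((2:ℝ)^(2*k))).mul (hasDerivAt_pow (2*k) x)
    convert h1 using 1
    · rfl
    · rfl
    · rfl
    rw [← hs]
    field_simp
    push_cast
    linear_combination (-(2*(k:ℝ)) * x^(2*k-1)) * hs2
  have hA := (hu.div harcsin hθne).neg
  -- derivative of the Si terms
  have hTopne : (2*(k:ℝ)+1)*θ ≠ 0 := by positivity
  have hTop := ((hasDerivAt_Si hTopne).comp x (harcsin.const_mul (2*(k:ℝ)+1))).const_mul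
      ((-1:ℝ)^(k+1) * (2*(k:ℝ)+1))
  have hSum : HasDerivAt (fun x : ℝ => ∑ n ∈ Finset.Icc 1 k,
        (-1:ℝ) ^ n * ((1 - 2 * (n : ℝ)) ^ 2 / ((k : ℝ) + 1 - n)) *
          ((2 * k).choose (k + n) : ℝ) * Si ((2 * (n : ℝ) - 1) * Real.arcsin x))
      (∑ n ∈ Finset.Icc 1 k, (-1:ℝ) ^ n * ((1 - 2 * (n : ℝ)) ^ 2 / ((k : ℝ) + 1 - n)) *
          ((2 * k).choose (k + n) : ℝ) *
          (Real.sin ((2*(n:ℝ)-1)*θ) / ((2*(n:ℝ)-1)*θ) * ((2*(n:ℝ)-1) * (1/s)))) x := by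
    apply HasDerivAt.fun_sum
    intro n hn
    have hn1 : 1 ≤ n := (Finset.mem_Icc.mp hn).1
    have hpos : (0:ℝ) < 2*(n:ℝ)-1 := by
      have : (1:ℝ) ≤ n := by exact_mod_cast hn1
      linarith
    have hne : (2*(n:ℝ)-1)*θ ≠ 0 := ne_of_gt (mul_pos hpos hθ0)
    exact ((hasDerivAt_Si hne).comp x (harcsin.const_mul (2*(n:ℝ)-1))).const_mul _
  have hAll := ((hA.add hTop).add hSum).const_mul ((1:ℝ) / 2 ^ (2*k))
  convert hAll using 1
  · rfl
  · rfl
  · rfl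
  -- now the algebraic identity
  have hkey := key k θ
  rw [hsin, hcos, hs2] at hkey
  have h24 : (2:ℝ)^(2*k) = 4^k := by rw [pow_mul]; norm_num
  have hgen : ∀ y b : ℝ, b ≠ 0 → y/(b*θ) * (b * (1/s)) = y * (1/(θ*s)) := by
    intro y b hb
    field_simp
  have hsum2 : ∑ n ∈ Finset.Icc 1 k, (-1:ℝ) ^ n * ((1 - 2 * (n : ℝ)) ^ 2 / ((k : ℝ) + 1 - n)) *
          ((2 * k).choose (k + n) : ℝ) *
          (Real.sin ((2*(n:ℝ)-1)*θ) / ((2*(n:ℝ)-1)*θ) * ((2*(n:ℝ)-1) * (1/s)))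
      = (∑ n ∈ Finset.Icc 1 k, (-1:ℝ)^n * ((1-2*(n:ℝ))^2/((k:ℝ)+1-n)) * ((2*k).choose (k+n) : ℝ) *
          Real.sin ((2*(n:ℝ)-1)*θ)) * (1/(θ*s)) := by
    rw [Finset.sum_mul]
    refine Finset.sum_congr rfl fun n hn => ?_
    have hn1 : 1 ≤ n := (Finset.mem_Icc.mp hn).1
    have hpos : (0:ℝ) < 2*(n:ℝ)-1 := by
      have : (1:ℝ) ≤ n := by exact_mod_cast hn1
      linarith
    rw [hgen _ _ (ne_of_gt hpos)]
    ring
  have htop2 : (-1:ℝ)^(k+1) * (2*(k:ℝ)+1) *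
        (Real.sin ((2*(k:ℝ)+1)*θ) / ((2*(k:ℝ)+1)*θ) * ((2*(k:ℝ)+1) * (1/s)))
      = ((-1:ℝ)^(k+1) * (2*(k:ℝ)+1) * Real.sin ((2*(k:ℝ)+1)*θ)) * (1/(θ*s)) := by
    rw [hgen _ _ (by positivity : (2*(k:ℝ)+1) ≠ 0)]
    ring
  have hcomb : ((-1:ℝ)^(k+1) * (2*(k:ℝ)+1) * Real.sin ((2*(k:ℝ)+1)*θ)) * (1/(θ*s)) +
      (∑ n ∈ Finset.Icc 1 k, (-1:ℝ)^n * ((1-2*(n:ℝ))^2/((k:ℝ)+1-n)) * ((2*k).choose (k+n) : ℝ) *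
          Real.sin ((2*(n:ℝ)-1)*θ)) * (1/(θ*s))
      = (4^k * (2*(k:ℝ) * x^(2*k-1) * (1-x^2) - x^(2*k+1))) * (1/(θ*s)) := by
    rw [← hkey]; ring
  rw [htop2, hsum2, add_assoc, hcomb, h24]
  rw [← hθ]
  field_simp
  rw [← hs]
  ring
end

section
/- For every real number x with x² ≤ 1, (arcsin x)² = Σ_{k=0}^∞ 2^{2k} · (k!)² · x^{2k+2} / ((2k+1)! · (k+1)), where arcsin denotes the real inverse sine function. -/
open Real Topology Filter

noncomputable def bb (k : ℕ) : ℝ :=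
  4 ^ k * (Nat.factorial k : ℝ) ^ 2 / (Nat.factorial (2 * k + 1) : ℝ)

lemma factR_pos (n : ℕ) : (0:ℝ) < (Nat.factorial n : ℝ) := by
  exact_mod_cast n.factorial_pos

lemma bb_pos (k : ℕ) : 0 < bb k := by
  unfold bb
  apply div_pos _ (factR_pos _)
  positivity

lemma bb_zero : bb 0 = 1 := by
  simp [bb, Nat.factorial]

lemma bb_succ (k : ℕ) : bb (k + 1) = (2 * (k:ℝ) + 2) * bb k / (2 * (k:ℝ) + 3) := by
  unfold bb
  have h1 : Nat.factorial (2 * (k+1) + 1) =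
      (2*k+3) * ((2*k+2) * Nat.factorial (2*k+1)) := by
    rw [show 2 * (k+1) + 1 = (2*k+2) + 1 by ring, Nat.factorial_succ,
      show 2*k+2 = (2*k+1)+1 by ring, Nat.factorial_succ]
  have h2 : Nat.factorial (k+1) = (k+1) * Nat.factorial k := Nat.factorial_succ k
  rw [h1, h2]
  have hf : ((Nat.factorial (2*k+1) : ℝ)) ≠ 0 := (factR_pos _).ne'
  push_cast
  field_simp
  ring

lemma bb_le_one (k : ℕ) : bb k ≤ 1 := by
  induction k with
  | zero => simp [bb_zero]
  | succ n ih =>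
      rw [bb_succ]
      rw [div_le_one (by positivity)]
      nlinarith [bb_pos n]

lemma bb_sq_le (k : ℕ) : bb k ^ 2 * ((k:ℝ) + 1) ≤ 4 := by
  induction k with
  | zero => simp [bb_zero]
  | succ n ih =>
      set K := (n : ℝ) with hK
      have hK0 : 0 ≤ K := Nat.cast_nonneg n
      have h1 : (2*K+2)^2 * (K+2) ≤ (2*K+3)^2 * (K+1) := by nlinarith
      have hb := bb_pos n
      rw [bb_succ]
      push_cast
      rw [div_pow, div_mul_eq_mul_div, div_le_iff₀ (by positivity)]
      calc ((2*K+2) * bb n)^2 * (K+1+1) = bb n ^2 * ((2*K+2)^2*(K+2)) := by ring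
        _ ≤ bb n ^2 * ((2*K+3)^2*(K+1)) := by nlinarith [sq_nonneg (bb n)]
        _ = (bb n ^2 * (K+1)) * (2*K+3)^2 := by ring
        _ ≤ 4 * (2*K+3)^2 := by nlinarith [sq_nonneg (2*K+3)]

lemma bb_le_sqrt (k : ℕ) : bb k ≤ 2 / Real.sqrt ((k:ℝ) + 1) := by
  have hs : 0 < Real.sqrt ((k:ℝ)+1) := Real.sqrt_pos.2 (by positivity)
  rw [le_div_iff₀ hs]
  have h2 : (bb k * Real.sqrt ((k:ℝ)+1))^2 ≤ 2^2 := by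
    rw [mul_pow, Real.sq_sqrt (by positivity : (0:ℝ) ≤ (k:ℝ)+1)]
    nlinarith [bb_sq_le k]
  have hnn : 0 ≤ bb k * Real.sqrt ((k:ℝ)+1) := mul_nonneg (bb_pos k).le hs.le
  exact (pow_le_pow_iff_left₀ hnn (by norm_num) (by norm_num)).1 h2

lemma summable_a : Summable (fun k : ℕ => bb k / ((k:ℝ) + 1)) := by
  have hbase : Summable (fun n : ℕ => 2 * (1 / (n:ℝ) ^ ((3:ℝ)/2))) :=
    (Real.summable_one_div_nat_rpow.2 (by norm_num)).mul_left 2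
  have hshift : Summable (fun k : ℕ => 2 * (1 / ((k:ℝ)+1) ^ ((3:ℝ)/2))) := by
    have := (summable_nat_add_iff (f := fun n : ℕ => 2 * (1 / (n:ℝ) ^ ((3:ℝ)/2))) 1).2 hbase
    refine this.congr fun k => ?_
    push_cast
    ring_nf
  refine Summable.of_nonneg_of_le (fun k => div_nonneg (bb_pos k).le (by positivity)) (fun k => ?_) hshift
  have hpos : (0:ℝ) < (k:ℝ) + 1 := by positivity
  have hrw : ((k:ℝ)+1) ^ ((3:ℝ)/2) = ((k:ℝ)+1) * Real.sqrt ((k:ℝ)+1) := by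
    rw [show (3:ℝ)/2 = 1 + 1/2 by norm_num, Real.rpow_add hpos, Real.rpow_one,
      ← Real.sqrt_eq_rpow]
  rw [hrw, mul_one_div]
  have hb := bb_le_sqrt k
  have hs : 0 < Real.sqrt ((k:ℝ)+1) := Real.sqrt_pos.2 hpos
  rw [div_le_div_iff₀ hpos (by positivity)]
  calc bb k * (((k:ℝ)+1) * Real.sqrt ((k:ℝ)+1))
      = (bb k * Real.sqrt ((k:ℝ)+1)) * ((k:ℝ)+1) := by ring
    _ ≤ 2 * ((k:ℝ)+1) := by
        have : bb k * Real.sqrt ((k:ℝ)+1) ≤ 2 := by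
          rw [← le_div_iff₀ hs]; exact hb
        nlinarith

noncomputable def gterm (k : ℕ) (y : ℝ) : ℝ := bb k * y ^ (2*k+1)
noncomputable def hterm (k : ℕ) (y : ℝ) : ℝ := bb k * (2*(k:ℝ)+1) * y ^ (2*k)
noncomputable def fterm (k : ℕ) (y : ℝ) : ℝ := bb k / ((k:ℝ)+1) * y ^ (2*k+2)

lemma summable_M {r : ℝ} (hr : |r| < 1) :
    Summable (fun k : ℕ => (2*(k:ℝ)+3) * (r^2)^k) := by
  have hρ : ‖r^2‖ < 1 := by
    rw [Real.norm_eq_abs, abs_pow, sq_abs]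
    nlinarith [abs_nonneg r, sq_abs r]
  have h1 : Summable (fun k : ℕ => (k:ℝ)^1 * (r^2)^k) :=
    summable_pow_mul_geometric_of_norm_lt_one 1 hρ
  have h2 : Summable (fun k : ℕ => (r^2)^k) := summable_geometric_of_norm_lt_one hρ
  have := (h1.mul_left 2).add (h2.mul_left 3)
  refine this.congr fun k => ?_
  ring

lemma hterm_bound {r y : ℝ} (hy : |y| ≤ r) (hr1 : r ≤ 1) (k : ℕ) :
    ‖hterm k y‖ ≤ (2*(k:ℝ)+3) * (r^2)^k := by
  have hr0 : 0 ≤ r := le_trans (abs_nonneg y) hy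
  have hpow : |y|^(2*k) ≤ r^(2*k) := pow_le_pow_left₀ (abs_nonneg y) hy _
  have : ‖hterm k y‖ = bb k * (2*(k:ℝ)+1) * |y|^(2*k) := by
    rw [hterm, norm_mul, Real.norm_eq_abs, Real.norm_eq_abs, abs_pow,
      abs_of_pos (mul_pos (bb_pos k) (by positivity))]
  rw [this]
  have h1 : bb k * (2*(k:ℝ)+1) * |y|^(2*k) ≤ 1 * (2*(k:ℝ)+3) * r^(2*k) := by
    have hb1 := bb_le_one k
    have h0 := (bb_pos k).le
    apply mul_le_mul (mul_le_mul hb1 (by nlinarith [Nat.cast_nonneg (α := ℝ) k]) (by positivity) (by norm_num)) hpow (by positivity)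
    positivity
  calc bb k * (2*(k:ℝ)+1) * |y|^(2*k) ≤ 1 * (2*(k:ℝ)+3) * r^(2*k) := h1
    _ = (2*(k:ℝ)+3) * (r^2)^k := by rw [← pow_mul]; ring

lemma gterm_bound {r y : ℝ} (hy : |y| ≤ r) (hr1 : r ≤ 1) (k : ℕ) :
    ‖2 * gterm k y‖ ≤ (2*(k:ℝ)+3) * (r^2)^k := by
  have hr0 : 0 ≤ r := le_trans (abs_nonneg y) hy
  have : ‖2 * gterm k y‖ = 2 * bb k * |y|^(2*k+1) := by
    rw [gterm, norm_mul, norm_mul, Real.norm_eq_abs, Real.norm_eq_abs, Real.norm_eq_abs, abs_pow,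
      abs_of_pos (bb_pos k)]
    norm_num
    ring
  rw [this]
  have hpow : |y|^(2*k+1) ≤ r^(2*k) := by
    calc |y|^(2*k+1) ≤ r^(2*k+1) := pow_le_pow_left₀ (abs_nonneg y) hy _
      _ ≤ r^(2*k) := pow_le_pow_of_le_one hr0 hr1 (by omega)
  have h0 := bb_pos k
  have h1 := bb_le_one k
  calc 2 * bb k * |y|^(2*k+1) ≤ 2 * 1 * r^(2*k) := by
        nlinarith [pow_nonneg (abs_nonneg y) (2*k+1), pow_nonneg hr0 (2*k)]
    _ ≤ (2*(k:ℝ)+3) * (r^2)^k := by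
        rw [← pow_mul]
        have h2 : (0:ℝ) ≤ r^(2*k) := pow_nonneg hr0 _
        nlinarith [Nat.cast_nonneg (α := ℝ) k]

lemma summable_hterm {y : ℝ} (hy : |y| < 1) : Summable (fun k => hterm k y) := by
  refine Summable.of_norm_bounded (summable_M (r := |y|) (by rwa [abs_abs]))
    (fun k => hterm_bound (le_refl _) hy.le k)

lemma summable_gterm2 {y : ℝ} (hy : |y| < 1) : Summable (fun k => 2 * gterm k y) := by
  refine Summable.of_norm_bounded (summable_M (r := |y|) (by rwa [abs_abs]))
    (fun k => gterm_bound (le_refl _) hy.le k)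

lemma summable_gterm {y : ℝ} (hy : |y| < 1) : Summable (fun k => gterm k y) := by
  have := (summable_gterm2 hy).mul_left (1/2)
  refine this.congr fun k => ?_
  ring

noncomputable def G (y : ℝ) : ℝ := ∑' k, gterm k y
noncomputable def F (y : ℝ) : ℝ := ∑' k, fterm k y
noncomputable def H (y : ℝ) : ℝ := ∑' k, hterm k y

lemma hterm_succ (k : ℕ) (y : ℝ) :
    hterm (k+1) y = y^2 * hterm k y + y * gterm k y := by
  unfold hterm gterm
  rw [bb_succ]
  have h3 : (0:ℝ) < 2*(k:ℝ)+3 := by positivity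
  have : 2*(k+1) = 2*k + 2 := by ring
  rw [this]
  push_cast
  field_simp
  ring

lemma ode {y : ℝ} (hy : |y| < 1) : (1 - y^2) * H y = 1 + y * G y := by
  have hH := summable_hterm hy
  have hG := summable_gterm hy
  have h0 : hterm 0 y = 1 := by simp [hterm, bb_zero]
  have hshift : H y = 1 + ∑' k, hterm (k+1) y := by
    rw [H, hH.tsum_eq_zero_add, h0]
  have hsum2 : ∑' k, hterm (k+1) y = y^2 * H y + y * G y := by
    calc ∑' k, hterm (k+1) y = ∑' k, (y^2 * hterm k y + y * gterm k y) := by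
          exact tsum_congr fun k => hterm_succ k y
      _ = y^2 * H y + y * G y := by
          rw [Summable.tsum_add (hH.mul_left _) (hG.mul_left _), tsum_mul_left, tsum_mul_left]
          rfl
  rw [hsum2] at hshift
  linarith

lemma G_hasDeriv {x : ℝ} (hx : |x| < 1) : HasDerivAt G (H x) x := by
  set r : ℝ := (1 + |x|) / 2 with hr
  have hx0 := abs_nonneg x
  have hr1 : r < 1 := by rw [hr]; linarith
  have hrx : |x| < r := by rw [hr]; linarith
  have hr0 : 0 < r := by rw [hr]; linarith
  have hrabs : |r| < 1 := by rwa [abs_of_pos hr0]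
  refine hasDerivAt_tsum_of_isPreconnected (summable_M hrabs) isOpen_Ioo
    (isPreconnected_Ioo) (t := Set.Ioo (-r) r) (y₀ := 0)
    (fun k y hy => ?_) (fun k y hy => ?_) ?_ ?_ ?_
  · -- HasDerivAt (gterm k) (hterm k y) y
    have := (hasDerivAt_pow (2*k+1) y).const_mul (bb k)
    refine this.congr_deriv ?_
    unfold hterm
    rw [show 2*k+1-1 = 2*k by omega]
    push_cast
    ring
  · have hyr : |y| ≤ r := by
      rw [abs_le]; exact ⟨hy.1.le, hy.2.le⟩
    exact hterm_bound hyr hr1.le k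
  · exact ⟨by linarith, by linarith⟩
  · refine summable_of_ne_finset_zero (s := ∅) fun k _ => ?_
    simp [gterm]
  · exact ⟨by rw [abs_lt] at hrx; exact hrx.1, by rw [abs_lt] at hrx; exact hrx.2⟩

lemma F_hasDeriv {x : ℝ} (hx : |x| < 1) : HasDerivAt F (2 * G x) x := by
  set r : ℝ := (1 + |x|) / 2 with hr
  have hx0 := abs_nonneg x
  have hr1 : r < 1 := by rw [hr]; linarith
  have hrx : |x| < r := by rw [hr]; linarith
  have hr0 : 0 < r := by rw [hr]; linarith
  have hrabs : |r| < 1 := by rwa [abs_of_pos hr0]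
  have key : HasDerivAt (fun z => ∑' k, fterm k z) (∑' k, 2 * gterm k x) x := by
    refine hasDerivAt_tsum_of_isPreconnected (summable_M hrabs) isOpen_Ioo
      (isPreconnected_Ioo) (t := Set.Ioo (-r) r) (y₀ := 0)
      (g := fun k y => fterm k y) (g' := fun k y => 2 * gterm k y)
      (fun k y hy => ?_) (fun k y hy => ?_) ?_ ?_ ?_
    · have := (hasDerivAt_pow (2*k+2) y).const_mul (bb k / ((k:ℝ)+1))
      have hD : HasDerivAt (fun y : ℝ => fterm k y)
          (bb k / ((k:ℝ)+1) * (((2*k+2 : ℕ):ℝ) * y ^ (2*k+2-1))) y := this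
      refine hD.congr_deriv ?_
      unfold gterm
      rw [show 2*k+2-1 = 2*k+1 by omega]
      have hk : ((k:ℝ)+1) ≠ 0 := by positivity
      push_cast
      field_simp
    · have hyr : |y| ≤ r := by
        rw [abs_le]; exact ⟨hy.1.le, hy.2.le⟩
      exact gterm_bound hyr hr1.le k
    · exact ⟨by linarith, by linarith⟩
    · refine summable_of_ne_finset_zero (s := ∅) fun k _ => ?_
      simp [fterm]
    · exact ⟨by rw [abs_lt] at hrx; exact hrx.1, by rw [abs_lt] at hrx; exact hrx.2⟩
  have : (∑' k, 2 * gterm k x) = 2 * G x := by rw [G, tsum_mul_left]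
  rw [this] at key
  exact key

lemma deriv_zero_const {φ : ℝ → ℝ} (hd : ∀ y ∈ Set.Ioo (-1:ℝ) 1, HasDerivAt φ 0 y)
    {x : ℝ} (hx : x ∈ Set.Ioo (-1:ℝ) 1) : φ x = φ 0 := by
  have h0 : (0:ℝ) ∈ Set.Ioo (-1:ℝ) 1 := by norm_num
  refine (convex_Ioo (-1:ℝ) 1).is_const_of_fderivWithin_eq_zero
    (fun y hy => ((hd y hy).differentiableAt).differentiableWithinAt)
    (fun y hy => ?_) hx h0
  rw [fderivWithin_of_isOpen isOpen_Ioo hy, (hd y hy).hasFDerivAt.fderiv]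
  ext z
  simp

lemma G_eq {x : ℝ} (hx : |x| < 1) : Real.sqrt (1 - x^2) * G x = Real.arcsin x := by
  set φ : ℝ → ℝ := fun y => Real.sqrt (1 - y^2) * G y - Real.arcsin y with hφ
  have hd : ∀ y ∈ Set.Ioo (-1:ℝ) 1, HasDerivAt φ 0 y := by
    intro y hy
    have hy1 : |y| < 1 := by rw [abs_lt]; exact ⟨hy.1, hy.2⟩
    have hpos : 0 < 1 - y^2 := by nlinarith [abs_nonneg y, sq_abs y]
    set s := Real.sqrt (1 - y^2) with hs
    have hs0 : 0 < s := Real.sqrt_pos.2 hpos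
    have hs2 : s^2 = 1 - y^2 := Real.sq_sqrt hpos.le
    have h1 : HasDerivAt (fun y : ℝ => 1 - y^2) (-((2:ℕ) * y^(2-1))) y :=
      (hasDerivAt_pow 2 y).const_sub 1
    have h2 : HasDerivAt (fun y : ℝ => Real.sqrt (1 - y^2))
        (-((2:ℕ) * y^(2-1)) / (2 * s)) y := h1.sqrt hpos.ne'
    have h3 := h2.mul (G_hasDeriv hy1)
    have h4 := Real.hasDerivAt_arcsin (by linarith [hy.1] : y ≠ -1) (by linarith [hy.2] : y ≠ 1)
    have h5 := h3.sub h4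
    refine h5.congr_deriv ?_
    have hode := ode hy1
    have : -((2:ℕ) * y^(2-1)) / (2 * s) * G y + s * H y - 1 / Real.sqrt (1 - y^2)
        = (-(y * G y) + s^2 * H y - 1) / s := by
      rw [← hs]
      field_simp
      ring
    rw [this, hs2, hode]
    simp

  have hx' : x ∈ Set.Ioo (-1:ℝ) 1 := by rw [abs_lt] at hx; exact ⟨hx.1, hx.2⟩
  have := deriv_zero_const hd hx'
  have hG0 : G 0 = 0 := by
    unfold G
    have : ∀ k : ℕ, gterm k 0 = 0 := fun k => by simp [gterm]
    simp [this]
  have hφ0 : φ 0 = 0 := by simp [hφ, hG0]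
  rw [hφ0] at this
  have := sub_eq_zero.1 this
  linarith [this]

lemma main_open {x : ℝ} (hx : |x| < 1) : Real.arcsin x ^ 2 = F x := by
  set ψ : ℝ → ℝ := fun y => Real.arcsin y ^ 2 - F y with hψ
  have hd : ∀ y ∈ Set.Ioo (-1:ℝ) 1, HasDerivAt ψ 0 y := by
    intro y hy
    have hy1 : |y| < 1 := by rw [abs_lt]; exact ⟨hy.1, hy.2⟩
    have hpos : 0 < 1 - y^2 := by nlinarith [abs_nonneg y, sq_abs y]
    set s := Real.sqrt (1 - y^2) with hs
    have hs0 : 0 < s := Real.sqrt_pos.2 hpos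
    have h4 := Real.hasDerivAt_arcsin (by linarith [hy.1] : y ≠ -1) (by linarith [hy.2] : y ≠ 1)
    have h5 := (h4.pow 2).sub (F_hasDeriv hy1)
    refine h5.congr_deriv ?_
    have hGy : G y = Real.arcsin y / s := by
      rw [eq_div_iff hs0.ne']
      have := G_eq hy1
      rw [← hs] at this
      linarith [this]
    rw [hGy, ← hs]
    field_simp
    norm_num
  have hx' : x ∈ Set.Ioo (-1:ℝ) 1 := by rw [abs_lt] at hx; exact ⟨hx.1, hx.2⟩
  have hconst := deriv_zero_const hd hx'
  have hF0 : F 0 = 0 := by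
    unfold F
    have : ∀ k : ℕ, fterm k 0 = 0 := fun k => by simp [fterm]
    simp [this]
  have hψ0 : ψ 0 = 0 := by simp [hψ, hF0]
  rw [hψ0] at hconst
  have := sub_eq_zero.1 hconst
  linarith [this]

lemma main_all {x : ℝ} (hx : |x| ≤ 1) : Real.arcsin x ^ 2 = F x := by
  rcases lt_or_eq_of_le hx with h | h
  · exact main_open h
  · -- |x| = 1
    set c : ℝ → ℝ := fun y => max (-1) (min 1 y) with hc
    have hccont : Continuous c := continuous_const.max (continuous_const.min continuous_id)
    have hcabs : ∀ y, |c y| ≤ 1 := by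
      intro y
      rw [abs_le]
      constructor
      · exact le_max_left _ _
      · exact max_le (by norm_num) (min_le_left _ _)
    have hceq : ∀ y, |y| ≤ 1 → c y = y := by
      intro y hy
      rw [abs_le] at hy
      simp [hc, min_eq_right hy.2, max_eq_right hy.1]
    set Fc : ℝ → ℝ := fun y => ∑' k, fterm k (c y) with hFc
    have hFccont : Continuous Fc := by
      refine continuous_tsum (fun k => ?_) summable_a (fun k y => ?_)
      · exact continuous_const.mul (hccont.pow _)
      · unfold fterm
        rw [norm_mul, norm_div, Real.norm_eq_abs, Real.norm_eq_abs, Real.norm_eq_abs,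
          abs_of_pos (bb_pos k), abs_of_pos (by positivity : (0:ℝ) < (k:ℝ)+1), abs_pow]
        have h1 : |c y|^(2*k+2) ≤ 1 := pow_le_one₀ (abs_nonneg _) (hcabs y)
        have h2 : 0 ≤ bb k / ((k:ℝ)+1) := div_nonneg (bb_pos k).le (by positivity)
        calc bb k / ((k:ℝ)+1) * |c y|^(2*k+2) ≤ bb k / ((k:ℝ)+1) * 1 :=
              mul_le_mul_of_nonneg_left h1 h2
          _ = bb k / ((k:ℝ)+1) := mul_one _
    have hFceq : ∀ y, |y| ≤ 1 → Fc y = F y := by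
      intro y hy
      simp only [hFc, F, hceq y hy]
    have hxIcc : x ∈ closure (Set.Ioo (-1:ℝ) 1) := by
      rw [closure_Ioo (by norm_num : (-1:ℝ) ≠ 1)]
      rw [abs_le] at hx
      exact ⟨hx.1, hx.2⟩
    have hne : (𝓝[Set.Ioo (-1:ℝ) 1] x).NeBot := mem_closure_iff_nhdsWithin_neBot.1 hxIcc
    have t1 : Filter.Tendsto (fun y => Real.arcsin y ^ 2) (𝓝[Set.Ioo (-1:ℝ) 1] x)
        (𝓝 (Real.arcsin x ^ 2)) :=
      ((Real.continuous_arcsin.pow 2).tendsto x).mono_left nhdsWithin_le_nhds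
    have t2 : Filter.Tendsto Fc (𝓝[Set.Ioo (-1:ℝ) 1] x) (𝓝 (Fc x)) :=
      (hFccont.tendsto x).mono_left nhdsWithin_le_nhds
    have heq : (fun y => Real.arcsin y ^ 2) =ᶠ[𝓝[Set.Ioo (-1:ℝ) 1] x] Fc := by
      filter_upwards [self_mem_nhdsWithin] with y hy
      have hy1 : |y| < 1 := by rw [abs_lt]; exact ⟨hy.1, hy.2⟩
      rw [main_open hy1, hFceq y hy1.le]
    have t1' : Filter.Tendsto (fun y => Real.arcsin y ^ 2) (𝓝[Set.Ioo (-1:ℝ) 1] x)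
        (𝓝 (Fc x)) := t2.congr' heq.symm
    have := tendsto_nhds_unique t1 t1'
    rw [this, hFceq x hx]

theorem arcsin_sq_series (x : ℝ) (hx : x ^ 2 ≤ 1) :
    Real.arcsin x ^ 2 = ∑' k : ℕ,
      2 ^ (2 * k) * (Nat.factorial k : ℝ) ^ 2 * x ^ (2 * k + 2) /
        ((Nat.factorial (2 * k + 1) : ℝ) * ((k : ℝ) + 1)) := by
  have habs : |x| ≤ 1 := by nlinarith [sq_abs x, abs_nonneg x]
  rw [main_all habs]
  unfold F
  refine tsum_congr fun k => ?_
  unfold fterm bb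
  rw [show (2:ℝ)^(2*k) = 4^k by rw [pow_mul]; norm_num]
  have h1 : ((2*k+1).factorial : ℝ) ≠ 0 := (factR_pos _).ne'
  have h2 : ((k:ℝ)+1) ≠ 0 := by positivity
  field_simp
end

section
/- For every real number x with x² ≤ 1, (arcsin x)² = (1/2) · Σ_{n=1}^∞ (2x)^{2n} / (n² · C(2n, n)), where arcsin denotes the real inverse sine function and C(2n, n) denotes the central binomial coefficient. -/
open Real MeasureTheory Set

noncomputable def Acoef (m : ℕ) : ℝ := 4 ^ m / ((2 * m + 1) * Nat.centralBinom m)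

lemma Acoef_nonneg (m : ℕ) : 0 ≤ Acoef m := by
  unfold Acoef; positivity

lemma Acoef_le_one (m : ℕ) : Acoef m ≤ 1 := by
  have h : (4:ℕ) ^ m ≤ (2 * m + 1) * Nat.centralBinom m := by
    rcases Nat.eq_zero_or_pos m with rfl | hm
    · simp [Nat.centralBinom]
    · calc (4:ℕ) ^ m ≤ 2 * m * Nat.centralBinom m :=
            Nat.four_pow_le_two_mul_self_mul_centralBinom m hm
        _ ≤ (2 * m + 1) * Nat.centralBinom m := by
            exact Nat.mul_le_mul_right _ (by omega)
  have h' : (4:ℝ) ^ m ≤ (2 * m + 1) * Nat.centralBinom m := by exact_mod_cast h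
  have hpos : (0:ℝ) < (2 * m + 1) * Nat.centralBinom m := by
    have := Nat.centralBinom_pos m
    positivity
  rw [Acoef, div_le_one hpos]; exact h'

lemma arcsinProd_eq (n : ℕ) :
    (∏ i ∈ Finset.range n, (2 * (i:ℝ) + 2) / (2 * i + 3)) = Acoef n := by
  induction n with
  | zero => simp [Acoef, Nat.centralBinom]
  | succ n ih =>
    rw [Finset.prod_range_succ, ih]
    have hkey : ((n:ℝ) + 1) * (Nat.centralBinom (n+1) : ℝ)
        = 2 * (2 * n + 1) * Nat.centralBinom n := by
      exact_mod_cast Nat.succ_mul_centralBinom_succ n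
    have hcb : (0:ℝ) < (Nat.centralBinom n : ℝ) := by
      exact_mod_cast Nat.centralBinom_pos n
    have hcb' : (0:ℝ) < (Nat.centralBinom (n+1) : ℝ) := by
      exact_mod_cast Nat.centralBinom_pos (n+1)
    have hrep : (Nat.centralBinom (n+1) : ℝ)
        = 2 * (2 * n + 1) * Nat.centralBinom n / ((n:ℝ) + 1) := by
      field_simp
      linarith [hkey]
    unfold Acoef
    rw [hrep]
    push_cast
    field_simp
    ring

lemma sin_int (m : ℕ) :
    (∫ θ in (0:ℝ)..π, Real.sin θ ^ (2 * m + 1)) = 2 * Acoef m := by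
  rw [integral_sin_pow_odd, arcsinProd_eq]

lemma geom_odd (y : ℝ) (hy : |y| < 1) :
    ∑' k : ℕ, y ^ (2 * k + 1) = y * (1 - y ^ 2)⁻¹ := by
  have h0 : (0:ℝ) ≤ y ^ 2 := sq_nonneg y
  have h1 : y ^ 2 < 1 := by rw [sq_lt_one_iff₀ (abs_nonneg y) |>.symm] at hy; rwa [sq_abs] at hy
  calc ∑' k : ℕ, y ^ (2 * k + 1) = ∑' k : ℕ, y * (y ^ 2) ^ k := by
        refine tsum_congr fun k => ?_
        rw [pow_succ, pow_mul, mul_comm]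
    _ = y * ∑' k : ℕ, (y ^ 2) ^ k := tsum_mul_left
    _ = y * (1 - y ^ 2)⁻¹ := by rw [tsum_geometric_of_lt_one h0 h1]

lemma geom_odd_summable (y : ℝ) (hy : |y| < 1) :
    Summable fun k : ℕ => y ^ (2 * k + 1) := by
  have h1 : y ^ 2 < 1 := by rw [← sq_abs]; exact pow_lt_one₀ (abs_nonneg y) hy (by norm_num)
  have : Summable fun k : ℕ => (y ^ 2) ^ k * y :=
    (summable_geometric_of_lt_one (sq_nonneg y) h1).mul_right y
  refine this.congr fun k => ?_
  rw [← pow_mul, ← pow_succ]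

lemma inner_eval (t : ℝ) (ht0 : 0 ≤ t) (ht1 : t < 1) :
    (∫ θ in (0:ℝ)..π, t * Real.sin θ * (1 - (t * Real.sin θ) ^ 2)⁻¹)
      = 2 * Real.arcsin t / Real.sqrt (1 - t ^ 2) := by
  have hs2 : (0:ℝ) < 1 - t ^ 2 := by nlinarith
  set s : ℝ := Real.sqrt (1 - t ^ 2) with hs
  have hspos : 0 < s := Real.sqrt_pos.2 hs2
  have hssq : s ^ 2 = 1 - t ^ 2 := Real.sq_sqrt hs2.le
  -- denominator positivity
  have hden : ∀ θ : ℝ, (0:ℝ) < 1 - (t * Real.sin θ) ^ 2 := by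
    intro θ
    have h1 : (t * Real.sin θ) ^ 2 ≤ t ^ 2 := by
      rw [mul_pow]
      nlinarith [Real.sin_sq_le_one θ, sq_nonneg t]
    nlinarith
  set G : ℝ → ℝ := fun θ => -(s⁻¹ * Real.arctan (t * Real.cos θ / s)) with hG
  have hderiv : ∀ θ : ℝ, HasDerivAt G (t * Real.sin θ * (1 - (t * Real.sin θ) ^ 2)⁻¹) θ := by
    intro θ
    have h1 : HasDerivAt (fun θ : ℝ => t * Real.cos θ / s) (t * (-Real.sin θ) / s) θ :=
      ((Real.hasDerivAt_cos θ).const_mul t).div_const s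
    have h2 : HasDerivAt (fun θ : ℝ => Real.arctan (t * Real.cos θ / s))
        ((1 / (1 + (t * Real.cos θ / s) ^ 2)) * (t * (-Real.sin θ) / s)) θ :=
      (Real.hasDerivAt_arctan _).comp θ h1
    have h3 := (h2.const_mul s⁻¹).neg
    refine h3.congr_deriv ?_
    symm
    have key : s ^ 2 + (t * Real.cos θ) ^ 2 = 1 - (t * Real.sin θ) ^ 2 := by
      have := Real.sin_sq_add_cos_sq θ
      rw [hssq]; nlinarith
    have hdθ := (hden θ).ne'
    rw [← key] at hdθ ⊢
    field_simp
  have hcont : Continuous fun θ : ℝ => t * Real.sin θ * (1 - (t * Real.sin θ) ^ 2)⁻¹ := by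
    refine (continuous_const.mul Real.continuous_sin).mul (Continuous.inv₀ ?_ ?_)
    · fun_prop
    · intro θ; exact (hden θ).ne'
  rw [intervalIntegral.integral_eq_sub_of_hasDerivAt (fun θ _ => hderiv θ)
    (hcont.intervalIntegrable _ _)]
  have harc : Real.arcsin t = Real.arctan (t / s) :=
    Real.arcsin_eq_arctan ⟨by linarith, ht1⟩
  simp only [hG, Real.cos_pi, Real.cos_zero, mul_one, mul_neg_one]
  rw [neg_div, Real.arctan_neg, ← harc]
  field_simp
  ring

lemma stepI_summable (t : ℝ) (ht0 : 0 ≤ t) (ht1 : t < 1) :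
    Summable fun m : ℕ => 2 * Acoef m * t ^ (2 * m + 1) := by
  refine Summable.of_nonneg_of_le
    (fun m => mul_nonneg (mul_nonneg two_pos.le (Acoef_nonneg m)) (pow_nonneg ht0 _))
    (fun m => ?_)
    (((geom_odd_summable t (by rwa [abs_of_nonneg ht0])).mul_left 2))
  have := Acoef_le_one m
  have h2 : (0:ℝ) ≤ t ^ (2 * m + 1) := by positivity
  nlinarith [Acoef_nonneg m]

lemma stepI (t : ℝ) (ht0 : 0 ≤ t) (ht1 : t < 1) :
    ∑' m : ℕ, 2 * Acoef m * t ^ (2 * m + 1)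
      = 2 * Real.arcsin t / Real.sqrt (1 - t ^ 2) := by
  have habs : ∀ θ : ℝ, |t * Real.sin θ| < 1 := by
    intro θ
    rw [abs_mul, abs_of_nonneg ht0]
    calc t * |Real.sin θ| ≤ t * 1 := by
          exact mul_le_mul_of_nonneg_left (Real.abs_sin_le_one θ) ht0
      _ < 1 := by linarith
  have hsin : ∀ m : ℕ, (∫ θ in Ioc (0:ℝ) π, (t * Real.sin θ) ^ (2 * m + 1))
      = 2 * Acoef m * t ^ (2 * m + 1) := by
    intro m
    rw [← intervalIntegral.integral_of_le Real.pi_pos.le]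
    simp_rw [mul_pow]
    rw [intervalIntegral.integral_const_mul, sin_int]
    ring
  have hint : ∀ m : ℕ, Integrable (fun θ : ℝ => (t * Real.sin θ) ^ (2 * m + 1))
      (volume.restrict (Ioc 0 π)) := by
    intro m
    exact ((continuous_const.mul Real.continuous_sin).pow _).integrableOn_Ioc
  have hsum : Summable fun m : ℕ =>
      ∫ θ in Ioc (0:ℝ) π, ‖(t * Real.sin θ) ^ (2 * m + 1)‖ := by
    have hb : Summable fun m : ℕ => (t ^ 2) ^ m * (t * π) :=
      (summable_geometric_of_lt_one (sq_nonneg t)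
        (by rw [← sq_abs]; exact pow_lt_one₀ (abs_nonneg t) (by rwa [abs_of_nonneg ht0]) two_ne_zero)).mul_right _
    refine Summable.of_nonneg_of_le (fun m => integral_nonneg fun θ => norm_nonneg _)
      (fun m => ?_) hb
    have hle : ∀ θ ∈ Ioc (0:ℝ) π, ‖(t * Real.sin θ) ^ (2 * m + 1)‖ ≤ t ^ (2 * m + 1) := by
      intro θ _
      rw [norm_pow, Real.norm_eq_abs, abs_mul, abs_of_nonneg ht0]
      refine pow_le_pow_left₀ (by positivity) ?_ _
      calc t * |Real.sin θ| ≤ t * 1 :=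
            mul_le_mul_of_nonneg_left (Real.abs_sin_le_one θ) ht0
        _ = t := mul_one t
    calc (∫ θ in Ioc (0:ℝ) π, ‖(t * Real.sin θ) ^ (2 * m + 1)‖)
        ≤ ∫ _θ in Ioc (0:ℝ) π, t ^ (2 * m + 1) := by
          refine setIntegral_mono_on (hint m).norm ?_ measurableSet_Ioc hle
          exact integrableOn_const measure_Ioc_lt_top.ne
      _ = (t ^ 2) ^ m * (t * π) := by
          rw [setIntegral_const]
          simp [Real.volume_Ioc, ENNReal.toReal_ofReal Real.pi_pos.le]
          rw [← pow_mul]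
          rw [max_eq_left Real.pi_pos.le]
          ring
  calc ∑' m : ℕ, 2 * Acoef m * t ^ (2 * m + 1)
      = ∑' m : ℕ, ∫ θ in Ioc (0:ℝ) π, (t * Real.sin θ) ^ (2 * m + 1) :=
        tsum_congr fun m => (hsin m).symm
    _ = ∫ θ in Ioc (0:ℝ) π, ∑' m : ℕ, (t * Real.sin θ) ^ (2 * m + 1) :=
        integral_tsum_of_summable_integral_norm hint hsum
    _ = ∫ θ in Ioc (0:ℝ) π, t * Real.sin θ * (1 - (t * Real.sin θ) ^ 2)⁻¹ := by
        refine integral_congr_ae (Filter.Eventually.of_forall fun θ => ?_)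
        exact geom_odd _ (habs θ)
    _ = 2 * Real.arcsin t / Real.sqrt (1 - t ^ 2) := by
        rw [← intervalIntegral.integral_of_le Real.pi_pos.le]
        exact inner_eval t ht0 ht1


theorem main_nonneg (x : ℝ) (h0 : 0 ≤ x) (h1 : x ≤ 1) :
    Real.arcsin x ^ 2 = (1 / 2) * ∑' m : ℕ,
      (2 * x) ^ (2 * (m + 1)) /
        (((m : ℝ) + 1) ^ 2 * ((2 * (m + 1)).choose (m + 1) : ℝ)) := by
  set g : ℝ → ℝ := fun t => 2 * Real.arcsin t / Real.sqrt (1 - t ^ 2) with hg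
  set F : ℝ → ℝ := fun t => Real.arcsin t ^ 2 with hF
  have hFc : ContinuousOn F (Icc 0 x) := (Real.continuous_arcsin.pow 2).continuousOn
  have hFd : ∀ t ∈ Ioo (0:ℝ) x, HasDerivAt F (g t) t := by
    intro t ht
    have htn : t ≠ -1 := by intro h; rw [h] at ht; linarith [ht.1]
    have ht1 : t ≠ 1 := by intro h; rw [h] at ht; linarith [ht.2, h1]
    have := (Real.hasDerivAt_arcsin htn ht1).pow 2
    refine this.congr_deriv ?_
    symm
    simp [hg]
    ring
  have hgnn : ∀ t ∈ Ioo (0:ℝ) x, 0 ≤ g t := by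
    intro t ht
    have := Real.arcsin_nonneg.2 ht.1.le
    have := Real.sqrt_nonneg (1 - t ^ 2)
    positivity
  have hgint : IntegrableOn g (Ioc 0 x) :=
    intervalIntegral.integrableOn_deriv_of_nonneg hFc hFd hgnn
  have hFTC : (∫ t in (0:ℝ)..x, g t) = Real.arcsin x ^ 2 := by
    rw [intervalIntegral.integral_eq_sub_of_hasDeriv_right_of_le h0 hFc
      (fun t ht => (hFd t ht).hasDerivWithinAt)
      ((intervalIntegrable_iff_integrableOn_Ioc_of_le h0).2 hgint)]
    simp [hF]
  -- the functions f_m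
  set f : ℕ → ℝ → ℝ := fun m t => 2 * Acoef m * t ^ (2 * m + 1) with hf
  have hfint : ∀ m : ℕ, Integrable (f m) (volume.restrict (Ioc 0 x)) := fun m =>
    ((continuous_const.mul (continuous_pow _)).integrableOn_Ioc)
  have hfval : ∀ m : ℕ, (∫ t in Ioc (0:ℝ) x, f m t)
      = Acoef m * x ^ (2 * m + 2) / ((m:ℝ) + 1) := by
    intro m
    rw [← intervalIntegral.integral_of_le h0, hf]
    simp only
    rw [intervalIntegral.integral_const_mul, integral_pow]
    push_cast
    rw [zero_pow (by omega)]
    have hm : ((m:ℝ) + 1) ≠ 0 := by positivity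
    field_simp
    ring
  have hfnn : ∀ m : ℕ, ∀ t ∈ Ioc (0:ℝ) x, 0 ≤ f m t := by
    intro m t ht
    exact mul_nonneg (mul_nonneg two_pos.le (Acoef_nonneg m)) (pow_nonneg ht.1.le _)
  have hae1 : ∀ᵐ t : ℝ, t ≠ 1 := by
    rw [MeasureTheory.ae_iff]
    simp only [not_not, Set.setOf_eq_eq_singleton]
    exact measure_singleton 1
  -- a.e. on Ioc 0 x, tsum f = g
  have haetsum : ∀ᵐ t : ℝ ∂(volume.restrict (Ioc 0 x)),
      (∑' m : ℕ, f m t) = g t := by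
    rw [ae_restrict_iff' measurableSet_Ioc]
    filter_upwards [hae1] with t htne ht
    have ht1 : t < 1 := lt_of_le_of_ne (le_trans ht.2 h1) htne
    exact stepI t ht.1.le ht1
  -- summability of integrals
  have hsumm : Summable fun m : ℕ => ∫ t in Ioc (0:ℝ) x, ‖f m t‖ := by
    have hnorm : ∀ m : ℕ, (∫ t in Ioc (0:ℝ) x, ‖f m t‖) = ∫ t in Ioc (0:ℝ) x, f m t := by
      intro m
      refine setIntegral_congr_fun measurableSet_Ioc fun t ht => ?_
      exact Real.norm_of_nonneg (hfnn m t ht)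
    simp_rw [hnorm]
    refine summable_of_sum_range_le (c := ∫ t in Ioc (0:ℝ) x, g t)
      (fun m => integral_nonneg_of_ae (Filter.Eventually.mono
        ((ae_restrict_iff' measurableSet_Ioc).2 (Filter.Eventually.of_forall (hfnn m)))
        (fun t h => h))) ?_
    intro n
    have hpsum : (∑ m ∈ Finset.range n, ∫ t in Ioc (0:ℝ) x, f m t)
        = ∫ t in Ioc (0:ℝ) x, (∑ m ∈ Finset.range n, f m t) :=
      (integral_finset_sum _ fun m _ => hfint m).symm
    rw [hpsum]
    refine integral_mono_ae (integrable_finset_sum _ fun m _ => hfint m) hgint ?_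
    rw [Filter.EventuallyLE, ae_restrict_iff' measurableSet_Ioc]
    filter_upwards [hae1] with t htne ht
    have ht1 : t < 1 := lt_of_le_of_ne (le_trans ht.2 h1) htne
    calc (∑ m ∈ Finset.range n, f m t) ≤ ∑' m : ℕ, f m t :=
          Summable.sum_le_tsum _ (fun m _ => hfnn m t ht) (stepI_summable t ht.1.le ht1)
      _ = g t := stepI t ht.1.le ht1
  -- main chain
  have hchain : (∑' m : ℕ, ∫ t in Ioc (0:ℝ) x, f m t) = Real.arcsin x ^ 2 := by
    rw [integral_tsum_of_summable_integral_norm hfint hsumm]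
    rw [integral_congr_ae haetsum]
    rw [← intervalIntegral.integral_of_le h0]
    exact hFTC
  -- term identity
  have hterm : ∀ m : ℕ, (1 / 2) * ((2 * x) ^ (2 * (m + 1)) /
        (((m : ℝ) + 1) ^ 2 * ((2 * (m + 1)).choose (m + 1) : ℝ)))
      = Acoef m * x ^ (2 * m + 2) / ((m : ℝ) + 1) := by
    intro m
    have h0 : (2 * (m + 1)).choose (m + 1) = Nat.centralBinom (m + 1) := rfl
    have hkey : ((m:ℝ) + 1) * (Nat.centralBinom (m + 1) : ℝ)
        = 2 * (2 * m + 1) * Nat.centralBinom m := by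
      exact_mod_cast Nat.succ_mul_centralBinom_succ m
    have hcb : (0:ℝ) < (Nat.centralBinom m : ℝ) := by
      exact_mod_cast Nat.centralBinom_pos m
    have hm1 : ((m:ℝ) + 1) ≠ 0 := by positivity
    have hrep : (Nat.centralBinom (m + 1) : ℝ)
        = 2 * (2 * m + 1) * Nat.centralBinom m / ((m:ℝ) + 1) := by
      field_simp
      linarith [hkey]
    rw [h0, hrep, Acoef]
    have h2 : (2 * x) ^ (2 * (m + 1)) = 4 * 4 ^ m * x ^ (2 * m + 2) := by
      rw [mul_pow, pow_mul]
      norm_num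
      ring
    rw [h2]
    field_simp
    ring
  rw [← tsum_mul_left]
  rw [tsum_congr hterm, ← tsum_congr hfval, hchain]

theorem arcsin_sq_central_binom_series (x : ℝ) (hx : x ^ 2 ≤ 1) :
    Real.arcsin x ^ 2 = (1 / 2) * ∑' m : ℕ,
      (2 * x) ^ (2 * (m + 1)) /
        (((m : ℝ) + 1) ^ 2 * ((2 * (m + 1)).choose (m + 1) : ℝ)) := by
  rcases le_or_gt 0 x with hx0 | hx0
  · exact main_nonneg x hx0 (by nlinarith)
  · have hx0' : 0 ≤ -x := by linarith
    have hx1' : -x ≤ 1 := by nlinarith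
    have := main_nonneg (-x) hx0' hx1'
    have harc : Real.arcsin x ^ 2 = Real.arcsin (-x) ^ 2 := by
      rw [Real.arcsin_neg]; ring
    rw [harc, this]
    congr 1
    refine tsum_congr fun m => ?_
    congr 1
    have : (2 * -x) = -(2 * x) := by ring
    rw [this, Even.neg_pow ⟨m + 1, by ring⟩]
end

section
/- Let Ei denote the exponential integral, defined for z > 0 by Ei(z) = γ + ln(z) + Σ_{k=1}^∞ z^k / (k · k!), where γ is the Euler–Mascheroni constant. For every natural number n, the function F(x) = Σ_{k=0}^n C(n, k) · Ei((k+1) · ln(x+1)) · (−1)^{k+n} satisfies F'(x) = x^n / ln(x+1) for all x > 0, where C(n,k) denotes the binomial coefficient. -/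
open Real

/-- The exponential integral for positive arguments:
`Ei(z) = γ + log z + Σ_{k=1}^∞ z^k/(k·k!)`. -/
noncomputable def Ei (z : ℝ) : ℝ :=
  Real.eulerMascheroniConstant + Real.log z +
    ∑' k : ℕ, z ^ (k + 1) / (((k : ℝ) + 1) * (Nat.factorial (k + 1) : ℝ))

lemma summable_aux (R : ℝ) : Summable (fun k : ℕ => R ^ k / (Nat.factorial (k + 1) : ℝ)) := by
  apply Summable.of_norm_bounded (Real.summable_pow_div_factorial |R|)
  intro k
  rw [norm_div, norm_pow, Real.norm_eq_abs, Real.norm_eq_abs, Nat.abs_cast]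
  gcongr
  exact Nat.le_succ k

lemma hasDerivAt_tsum_part (z : ℝ) :
    HasDerivAt (fun y : ℝ => ∑' k : ℕ, y ^ (k + 1) / (((k : ℝ) + 1) * (Nat.factorial (k + 1) : ℝ)))
      (∑' k : ℕ, z ^ k / (Nat.factorial (k + 1) : ℝ)) z := by
  set R : ℝ := |z| + 1 with hR
  have hRpos : 0 < R := by positivity
  apply hasDerivAt_tsum_of_isPreconnected
    (u := fun k : ℕ => R ^ k / (Nat.factorial (k + 1) : ℝ))
    (t := Set.Ioo (-R) R) (y₀ := 0)
    (g' := fun k y => y ^ k / (Nat.factorial (k + 1) : ℝ))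
  · exact summable_aux R
  · exact isOpen_Ioo
  · exact isPreconnected_Ioo
  · intro k y _
    have h1 : HasDerivAt (fun y : ℝ => y ^ (k + 1)) (((k : ℝ) + 1) * y ^ k) y := by
      simpa using hasDerivAt_pow (k + 1) y
    have h2 := h1.div_const (((k : ℝ) + 1) * (Nat.factorial (k + 1) : ℝ))
    refine h2.congr_deriv ?_
    have hk : ((k : ℝ) + 1) ≠ 0 := by positivity
    have hf : (Nat.factorial (k + 1) : ℝ) ≠ 0 := by positivity
    field_simp
  · intro k y hy
    have hyR : |y| ≤ R := by
      rw [abs_le]; exact ⟨hy.1.le, hy.2.le⟩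
    rw [Real.norm_eq_abs, abs_div, abs_pow, Nat.abs_cast]
    gcongr
  · exact ⟨by linarith, by linarith⟩
  · have h0 : (fun k : ℕ => (0:ℝ) ^ (k + 1) / (((k:ℝ) + 1) * (Nat.factorial (k + 1) : ℝ)))
        = fun _ => (0:ℝ) := by
      funext k; simp
    rw [h0]; exact summable_zero
  · exact ⟨by linarith [neg_abs_le z], by linarith [le_abs_self z]⟩

lemma tsum_deriv_eq (z : ℝ) (hz : z ≠ 0) :
    (∑' k : ℕ, z ^ k / (Nat.factorial (k + 1) : ℝ)) = (Real.exp z - 1) / z := by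
  have hexp : Real.exp z = ∑' n : ℕ, z ^ n / (Nat.factorial n : ℝ) := by
    rw [Real.exp_eq_exp_ℝ, NormedSpace.exp_eq_tsum_div]
  have hs : Summable (fun n : ℕ => z ^ n / (Nat.factorial n : ℝ)) :=
    Real.summable_pow_div_factorial z
  have h0 : (∑' n : ℕ, z ^ n / (Nat.factorial n : ℝ))
      = 1 + ∑' k : ℕ, z ^ (k + 1) / (Nat.factorial (k + 1) : ℝ) := by
    rw [Summable.tsum_eq_zero_add hs]; simp
  have h1 : (∑' k : ℕ, z ^ (k + 1) / (Nat.factorial (k + 1) : ℝ))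
      = z * ∑' k : ℕ, z ^ k / (Nat.factorial (k + 1) : ℝ) := by
    rw [← tsum_mul_left]
    congr 1; funext k; rw [pow_succ]; ring
  have : Real.exp z = 1 + z * ∑' k : ℕ, z ^ k / (Nat.factorial (k + 1) : ℝ) := by
    rw [hexp, h0, h1]
  field_simp
  linarith [this]

lemma hasDerivAt_Ei (z : ℝ) (hz : 0 < z) : HasDerivAt Ei (Real.exp z / z) z := by
  have h1 : HasDerivAt Real.log (1 / z) z := by
    simpa [one_div] using Real.hasDerivAt_log hz.ne'
  have h2 := hasDerivAt_tsum_part z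
  have h3 := ((hasDerivAt_const z Real.eulerMascheroniConstant).add h1).add h2
  have hEi : Ei = fun y => (Real.eulerMascheroniConstant + Real.log y) +
      ∑' k : ℕ, y ^ (k + 1) / (((k : ℝ) + 1) * (Nat.factorial (k + 1) : ℝ)) := rfl
  rw [hEi]
  refine h3.congr_deriv ?_
  rw [tsum_deriv_eq z hz.ne']
  field_simp
  ring

theorem hasDerivAt_antiderivative_pow_div_log (n : ℕ) :
    ∀ x : ℝ, 0 < x →
      HasDerivAt (fun x : ℝ =>
          ∑ k ∈ Finset.range (n + 1),
            (n.choose k : ℝ) * Ei (((k : ℝ) + 1) * Real.log (x + 1)) * (-1) ^ (k + n))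
        (x ^ n / Real.log (x + 1)) x := by
  intro x hx
  have hx1 : (0:ℝ) < x + 1 := by linarith
  have hlog : 0 < Real.log (x + 1) := Real.log_pos (by linarith)
  have hterm : ∀ k ∈ Finset.range (n + 1),
      HasDerivAt (fun x : ℝ =>
          (n.choose k : ℝ) * Ei (((k : ℝ) + 1) * Real.log (x + 1)) * (-1) ^ (k + n))
        ((n.choose k : ℝ) * ((x + 1) ^ k / Real.log (x + 1)) * (-1) ^ (k + n)) x := by
    intro k _
    have hz : 0 < ((k : ℝ) + 1) * Real.log (x + 1) := by positivity
    have hinner : HasDerivAt (fun x : ℝ => ((k : ℝ) + 1) * Real.log (x + 1))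
        (((k : ℝ) + 1) * (1 / (x + 1))) x := by
      have hl : HasDerivAt (fun x : ℝ => Real.log (x + 1)) (1 / (x + 1)) x := by
        simpa [one_div] using ((hasDerivAt_id x).add_const 1).log hx1.ne'
      exact hl.const_mul _
    have hEi := (hasDerivAt_Ei _ hz).comp x hinner
    have hv : Real.exp (((k : ℝ) + 1) * Real.log (x + 1)) = (x + 1) ^ (k + 1) := by
      rw [mul_comm, Real.exp_mul, Real.exp_log hx1]
      norm_cast
    have hd := (hEi.const_mul (n.choose k : ℝ)).mul_const ((-1 : ℝ) ^ (k + n))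
    refine hd.congr_deriv ?_
    rw [hv]
    have h1 : ((k : ℝ) + 1) ≠ 0 := by positivity
    field_simp
    ring
  have hsum := HasDerivAt.fun_sum hterm
  refine hsum.congr_deriv ?_
  have key : (x : ℝ) ^ n
      = ∑ k ∈ Finset.range (n + 1), (n.choose k : ℝ) * (x + 1) ^ k * (-1) ^ (k + n) := by
    have hb := add_pow (x + 1) (-1 : ℝ) n
    have hx' : x = (x + 1) + (-1) := by ring
    rw [hx', hb]
    apply Finset.sum_congr rfl
    intro k hk
    have hk' : k ≤ n := Nat.lt_succ_iff.mp (Finset.mem_range.mp hk)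
    have hpar : ((-1 : ℝ)) ^ (n - k) = (-1) ^ (k + n) := by
      rw [show k + n = (n - k) + 2 * k by omega, pow_add, pow_mul]
      simp
    rw [hpar]; ring
  rw [key, Finset.sum_div]
  apply Finset.sum_congr rfl
  intro k _
  field_simp
end
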